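/- arXiv:2306.08160 — 5 statements merged into one kernel-verified Lean document; each statement's English description precedes it below -/
import Mathlib

section
/- Let h ≥ 1 be an integer, c ∈ ℂ with c ≠ 0, and let φ, ψ be germs of holomorphic functions of two variables (λ, t) at (0,0) of the form φ(λ, t) = c·t^{h+1} + r(t) + λ·ψ(λ, t), where r is a holomorphic germ in t vanishing to order at least h+2 at 0. Let φ̇ denote ∂φ/∂t. Then the quotient ring O(ℂ², 0)/⟨φ, φ̇⟩ has complex dimension at least h; that is, the intersection multiplicity at the origin of the curves {φ = 0} and {φ̇ = 0} is at least h. -/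
open MvPowerSeries

/-- Formalization in the formal-germ ring `ℂ⟦λ, t⟧ = MvPowerSeries (Fin 2) ℂ`
(variable `0` is the parameter `λ`, variable `1` is `t`).
`φ = c·t^(h+1) + r + λ·ψ` with `r` a series in `t` only, vanishing to order ≥ h+2,
and `φt = ∂φ/∂t`. The quotient by the ideal `⟨φ, φt⟩` has dimension at least `h`. -/
theorem stmt_13 (h : ℕ) (hh : 1 ≤ h) (c : ℂ) (hc : c ≠ 0)
    (φ φt ψ r : MvPowerSeries (Fin 2) ℂ)
    (hr : ∀ e : Fin 2 →₀ ℕ, (e 0 ≠ 0 ∨ e 1 < h + 2) →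
      MvPowerSeries.coeff (R := ℂ) e r = 0)
    (hφ : φ = MvPowerSeries.C (σ := Fin 2) (R := ℂ) c * MvPowerSeries.X 1 ^ (h + 1)
      + r + MvPowerSeries.X 0 * ψ)
    (hφt : ∀ e : Fin 2 →₀ ℕ, MvPowerSeries.coeff (R := ℂ) e φt =
      ((e 1 : ℂ) + 1) * MvPowerSeries.coeff (R := ℂ) (e + Finsupp.single 1 1) φ) :
    (h : Cardinal) ≤
      Module.rank ℂ (MvPowerSeries (Fin 2) ℂ ⧸ Ideal.span {φ, φt}) := by
  classical
  -- coefficient of φ at low monomials with no λ vanishes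
  have hφlow : ∀ v : Fin 2 →₀ ℕ, v 0 = 0 → v 1 < h + 1 →
      MvPowerSeries.coeff (R := ℂ) v φ = 0 := by
    intro v hv0 hv1
    rw [hφ, map_add, map_add, coeff_C_mul, coeff_X_pow]
    have h1 : v ≠ Finsupp.single 1 (h + 1) := by
      intro hcon
      rw [hcon, Finsupp.single_apply] at hv1
      simp at hv1
    rw [if_neg h1]
    have h2 : MvPowerSeries.coeff (R := ℂ) v r = 0 := hr v (Or.inr (by omega))
    have h3 : MvPowerSeries.coeff (R := ℂ) v (MvPowerSeries.X 0 * ψ) = 0 := by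
      rw [MvPowerSeries.X, coeff_monomial_mul, if_neg]
      intro hle
      have := hle 0
      rw [Finsupp.single_apply] at this
      simp [hv0] at this
    rw [h2, h3]; ring
  have hφtlow : ∀ v : Fin 2 →₀ ℕ, v 0 = 0 → v 1 < h →
      MvPowerSeries.coeff (R := ℂ) v φt = 0 := by
    intro v hv0 hv1
    rw [hφt, hφlow (v + Finsupp.single 1 1) (by simp [hv0]) (by simp; omega), mul_zero]
  -- coefficient of any multiple at low monomials vanishes
  have hmul : ∀ (f A : MvPowerSeries (Fin 2) ℂ),
      (∀ v : Fin 2 →₀ ℕ, v 0 = 0 → v 1 < h → MvPowerSeries.coeff (R := ℂ) v f = 0) →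
      ∀ e : Fin 2 →₀ ℕ, e 0 = 0 → e 1 < h →
      MvPowerSeries.coeff (R := ℂ) e (A * f) = 0 := by
    intro f A hf e he0 he1
    rw [MvPowerSeries.coeff_mul]
    apply Finset.sum_eq_zero
    intro p hp
    rw [Finset.HasAntidiagonal.mem_antidiagonal] at hp
    have hp0 : p.2 0 = 0 := by
      have := congrArg (fun g => g 0) hp
      simp at this; omega
    have hp1 : p.2 1 < h := by
      have := congrArg (fun g => g 1) hp
      simp at this; omega
    rw [hf p.2 hp0 hp1, mul_zero]
  -- any element of the ideal has vanishing low coefficients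
  have hideal : ∀ g ∈ Ideal.span ({φ, φt} : Set (MvPowerSeries (Fin 2) ℂ)),
      ∀ e : Fin 2 →₀ ℕ, e 0 = 0 → e 1 < h → MvPowerSeries.coeff (R := ℂ) e g = 0 := by
    intro g hg e he0 he1
    obtain ⟨a, b, hab⟩ := Ideal.mem_span_pair.mp hg
    rw [← hab, map_add,
      hmul φ a (fun v h0 h1 => hφlow v h0 (by omega)) e he0 he1,
      hmul φt b hφtlow e he0 he1, add_zero]
  -- the images of X 1 ^ i, i < h, are linearly independent in the quotient
  set I := Ideal.span ({φ, φt} : Set (MvPowerSeries (Fin 2) ℂ))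
  have hli : LinearIndependent ℂ
      (fun i : Fin h => (Ideal.Quotient.mk I (MvPowerSeries.X 1 ^ (i : ℕ)))) := by
    rw [Fintype.linearIndependent_iff]
    intro g hg j
    have hsum : (∑ i : Fin h, g i • (MvPowerSeries.X (σ := Fin 2) (R := ℂ) 1 ^ (i : ℕ))) ∈ I := by
      rw [← Ideal.Quotient.eq_zero_iff_mem, ← Ideal.Quotient.mkₐ_eq_mk ℂ, map_sum]
      simp only [map_smul, Ideal.Quotient.mkₐ_eq_mk]
      exact hg
    have := hideal _ hsum (Finsupp.single 1 (j : ℕ)) (by simp) (by simp [j.2])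
    rw [map_sum] at this
    have hcoeff : ∀ i : Fin h,
        MvPowerSeries.coeff (R := ℂ) (Finsupp.single 1 (j : ℕ))
          (g i • MvPowerSeries.X (σ := Fin 2) (R := ℂ) 1 ^ (i : ℕ)) =
        if i = j then g i else 0 := by
      intro i
      rw [map_smul, smul_eq_mul, coeff_X_pow]
      by_cases hij : i = j
      · subst hij; simp
      · rw [if_neg, if_neg hij, mul_zero]
        intro hcon
        have := congrArg (fun u => u (1 : Fin 2)) hcon
        simp at this
        exact hij (Fin.ext this.symm)
    rw [Finset.sum_congr rfl (fun i _ => hcoeff i), Finset.sum_ite_eq' _ j] at this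
    simpa using this
  have := hli.cardinal_le_rank
  simpa using this
end

section
/- Let h ≥ 1, let c ≠ 0, y₀ ∈ ℂ, and let γ_n, φ be holomorphic functions on a neighborhood of y₀ in ℂ of the following form: φ(y₀ + t) = c·t^{h+1} + O(t^{h+2}), and γ_n(y₀ + t) = α·u^{-n} + ε_n(t) where α ≠ 0, |u| > 1, and sup_t |ε_n(t)| = o(|u|^{-n}). Then for every sufficiently large n, the equation γ_n(y) = φ(y) has exactly h+1 solutions near y₀, and they are of the form y = y₀ + t_n^{(i)} with t_n^{(i)} = ω_i·(α u^{-n}/c)^{1/(h+1)} + o(|u|^{-n/(h+1)}), where ω_1, ..., ω_{h+1} range over choices of (h+1)-th roots of unity times a fixed (h+1)-th root. -/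
open Metric Complex

set_option maxHeartbeats 4000000

lemma aux_cpow_root_est (m : ℕ) (hm : 2 ≤ m) (w : ℂ) (hw : ‖w - 1‖ ≤ 1/4) :
    ‖w ^ ((m:ℂ))⁻¹ - 1‖ ≤ 2 * ‖w - 1‖ := by
  have hw0 : w ≠ 0 := by
    intro hw0
    rw [hw0] at hw
    norm_num at hw
  have hlog : ‖Complex.log w‖ ≤ (3/2) * ‖w - 1‖ := by
    have := Complex.norm_log_one_add_half_le_self (z := w - 1) (by linarith)
    simpa using this
  have hmR : (2:ℝ) ≤ (m:ℝ) := by exact_mod_cast hm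
  have hx : ‖Complex.log w * ((m:ℂ))⁻¹‖ ≤ (3/4) * ‖w - 1‖ := by
    rw [norm_mul, norm_inv, Complex.norm_natCast]
    calc ‖Complex.log w‖ * ((m:ℝ))⁻¹ ≤ ((3/2) * ‖w - 1‖) * (2⁻¹ : ℝ) := by
          apply mul_le_mul hlog _ (by positivity) (by positivity)
          exact inv_anti₀ (by norm_num) hmR
      _ = (3/4) * ‖w - 1‖ := by ring
  have hx1 : ‖Complex.log w * ((m:ℂ))⁻¹‖ ≤ 1 := by
    calc ‖Complex.log w * ((m:ℂ))⁻¹‖ ≤ (3/4) * ‖w - 1‖ := hx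
      _ ≤ (3/4) * (1/4) := by nlinarith [norm_nonneg (w-1)]
      _ ≤ 1 := by norm_num
  rw [Complex.cpow_def_of_ne_zero hw0]
  calc ‖Complex.exp (Complex.log w * ((m:ℂ))⁻¹) - 1‖
      ≤ 2 * ‖Complex.log w * ((m:ℂ))⁻¹‖ := by
        have := Complex.norm_exp_sub_one_le (x := Complex.log w * ((m:ℂ))⁻¹)
          hx1
        simpa using this
    _ ≤ 2 * ((3/4) * ‖w - 1‖) := by linarith
    _ ≤ 2 * ‖w - 1‖ := by nlinarith [norm_nonneg (w-1)]

/-- nonneg real with x ^ m = y ^ m implies x = y (m ≠ 0) -/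
lemma aux_pow_eq (m : ℕ) (hm : m ≠ 0) {x y : ℝ} (hx : 0 ≤ x) (hy : 0 ≤ y)
    (hxy : x ^ m = y ^ m) : x = y := by
  have := Real.pow_rpow_inv_natCast hx hm
  rw [hxy, Real.pow_rpow_inv_natCast hy hm] at this
  exact this.symm

/-- The solutions of `γ_n(y) = φ(y)` near a tangency of order `h` form, for
large `n`, approximately a regular `(h+1)`-gon: there are exactly `h+1`
solutions `y = y₀ + t`, of the form `t = ω·ζ_n + o(|u|^{-n/(h+1)})` where
`ζ_n^{h+1} = α u^{-n}/c` and `ω` ranges over the `(h+1)`-th roots of unity. -/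
theorem stmt_14 (h : ℕ) (hh : 1 ≤ h) (c α u y₀ : ℂ) (hc : c ≠ 0) (hα : α ≠ 0)
    (hu : 1 < ‖u‖) (δ : ℝ) (hδ : 0 < δ)
    (r : ℂ → ℂ) (hr_hol : DifferentiableOn ℂ r (ball (0 : ℂ) δ))
    (A : ℝ) (hr : ∀ t ∈ ball (0 : ℂ) δ, ‖r t‖ ≤ A * ‖t‖ ^ (h + 2))
    (φ : ℂ → ℂ) (hφ : ∀ t, φ (y₀ + t) = c * t ^ (h + 1) + r t)
    (E : ℕ → ℂ → ℂ) (hE_hol : ∀ n, DifferentiableOn ℂ (E n) (ball (0 : ℂ) δ))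
    (γ : ℕ → ℂ → ℂ) (hγ : ∀ n t, γ n (y₀ + t) = α * (u⁻¹) ^ n + E n t)
    (hE : ∀ η : ℝ, 0 < η → ∃ N : ℕ, ∀ n ≥ N, ∀ t ∈ ball (0 : ℂ) δ,
      ‖E n t‖ ≤ η * ‖u‖⁻¹ ^ n) :
    ∃ δ' : ℝ, 0 < δ' ∧ δ' ≤ δ ∧ ∀ κ : ℝ, 0 < κ → ∃ N : ℕ, ∀ n ≥ N,
      ∃ T : Finset ℂ,
        (↑T = {t : ℂ | t ∈ ball (0 : ℂ) δ' ∧ γ n (y₀ + t) = φ (y₀ + t)}) ∧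
        T.card = h + 1 ∧
        ∃ ζ : ℂ, ζ ^ (h + 1) = α * (u⁻¹) ^ n / c ∧
          ∃ g : ℂ → ℂ, Set.InjOn g ↑T ∧ ∀ t ∈ T,
            g t ^ (h + 1) = 1 ∧
            ‖t - g t * ζ‖ ≤ κ * ‖u‖ ^ (-(n : ℝ) / (h + 1)) := by
  classical
  have hu0 : (0:ℝ) < ‖u‖ := lt_trans one_pos hu
  have hune : u ≠ 0 := by
    intro h0; rw [h0] at hu0; simp at hu0
  set m : ℕ := h + 1 with hmdef
  clear_value m
  have hm0 : m ≠ 0 := by omega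
  have hm2 : 2 ≤ m := by omega
  have hmR2 : (2:ℝ) ≤ (m:ℝ) := by exact_mod_cast hm2
  -- constants
  have hαpos : (0:ℝ) < ‖α‖ := norm_pos_iff.mpr hα
  have hcpos : (0:ℝ) < ‖c‖ := norm_pos_iff.mpr hc
  set A' : ℝ := max A 1 with hA'def
  have hA'pos : (0:ℝ) < A' := lt_of_lt_of_le one_pos (le_max_right _ _)
  have hrA' : ∀ t ∈ ball (0:ℂ) δ, ‖r t‖ ≤ A' * ‖t‖ ^ (h + 2) := by
    intro t ht
    refine (hr t ht).trans (mul_le_mul_of_nonneg_right ?_ (by positivity))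
    rw [hA'def]; exact le_max_left _ _
  clear_value A'
  have hαc : α / c ≠ 0 := div_ne_zero hα hc
  set B : ℝ := ‖α / c‖ ^ (((m:ℝ))⁻¹) with hBdef
  have hB : 0 < B := Real.rpow_pos_of_pos (norm_pos_iff.mpr hαc) _
  have hBm : B ^ m = ‖α / c‖ := Real.rpow_inv_natCast_pow (norm_nonneg _) hm0
  clear_value B
  set K₀ : ℝ := (4 * ‖α‖ / ‖c‖) ^ (((m:ℝ))⁻¹) with hK0def
  have hK₀ : 0 ≤ K₀ := Real.rpow_nonneg (by positivity) _
  have hK₀m : K₀ ^ m = 4 * ‖α‖ / ‖c‖ := Real.rpow_inv_natCast_pow (by positivity) hm0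
  clear_value K₀
  set K : ℝ := K₀ + 5 * B + 1 with hKdef
  have hK : 0 < K := by rw [hKdef]; linarith
  clear_value K
  set q : ℝ := ‖u‖ ^ (-((m:ℝ))⁻¹) with hqdef
  have hq0 : 0 < q := Real.rpow_pos_of_pos hu0 _
  have hq1 : q < 1 := Real.rpow_lt_one_of_one_lt_of_neg hu (neg_lt_zero.mpr (by positivity))
  have hqpow : ∀ k : ℕ, q ^ k = ‖u‖ ^ (-((m:ℝ))⁻¹ * k) := by
    intro k
    rw [← Real.rpow_natCast q k, hqdef, ← Real.rpow_mul hu0.le]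
  have hqm : ∀ n : ℕ, (q ^ n) ^ m = (‖u‖⁻¹) ^ n := by
    intro n
    rw [← pow_mul, hqpow (n * m)]
    have : -((m:ℝ))⁻¹ * ((n * m : ℕ) : ℝ) = -(n:ℝ) := by
      push_cast
      field_simp
    rw [this, Real.rpow_neg hu0.le, Real.rpow_natCast, inv_pow]
  clear_value q
  have hqeq : ∀ n : ℕ, q ^ n = ‖u‖ ^ (-(n : ℝ) / ((h:ℝ) + 1)) := by
    intro n
    rw [hqpow n]
    congr 1
    have : ((m:ℝ)) = (h:ℝ) + 1 := by push_cast [hmdef]; ring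
    rw [this]
    ring
  -- δ'
  have hcA : (0:ℝ) < ‖c‖ / (2 * A') := div_pos hcpos (by linarith)
  refine ⟨min δ (‖c‖ / (2 * A')), lt_min hδ hcA, min_le_left _ _, ?_⟩
  set δ' : ℝ := min δ (‖c‖ / (2 * A')) with hδ'def
  have hδ'pos : 0 < δ' := lt_min hδ hcA
  have hδ'le : δ' ≤ δ := min_le_left _ _
  have hδ'c : A' * δ' ≤ ‖c‖ / 2 := by
    have h1 : δ' ≤ ‖c‖ / (2 * A') := min_le_right _ _
    calc A' * δ' ≤ A' * (‖c‖ / (2 * A')) := mul_le_mul_of_nonneg_left h1 hA'pos.le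
      _ = ‖c‖ / 2 := by field_simp
  clear_value δ'
  intro κ hκ
  set ε₀ : ℝ := min (1/4) (κ / (2 * B + 1)) with hε₀def
  have hε₀pos : 0 < ε₀ := lt_min (by norm_num) (div_pos hκ (by linarith))
  have hε₀le : ε₀ ≤ 1/4 := min_le_left _ _
  have hε₀κ : 2 * ε₀ * B ≤ κ := by
    have h1 : ε₀ * (2 * B + 1) ≤ κ :=
      (le_div_iff₀ (by positivity)).mp (min_le_right _ _)
    linarith [hε₀pos, h1]
  clear_value ε₀
  set η : ℝ := ‖α‖ * ε₀ / 2 with hηdef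
  have hη : 0 < η := by rw [hηdef]; positivity
  clear_value η
  obtain ⟨N₁, hN₁⟩ := hE η hη
  -- eventual smallness of q ^ n
  have hqtend : Filter.Tendsto (fun n => q ^ n) Filter.atTop (nhds 0) :=
    tendsto_pow_atTop_nhds_zero_of_lt_one hq0.le hq1
  have hsmall : ∀ᶠ n in Filter.atTop,
      q ^ n ≤ min (η / (A' * 3 ^ (h + 2) * K ^ (h + 2))) (δ' / (3 * K)) := by
    apply hqtend.eventually_le_const
    refine lt_min (div_pos hη ?_) (div_pos hδ'pos (by linarith))
    have h3 : (0:ℝ) < (3:ℝ) ^ (h+2) := by positivity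
    have hKp : (0:ℝ) < K ^ (h+2) := pow_pos hK _
    positivity
  obtain ⟨N₂, hN₂⟩ := Filter.eventually_atTop.mp hsmall
  refine ⟨max N₁ N₂, ?_⟩
  intro n hn
  have hnN₁ : N₁ ≤ n := le_trans (le_max_left _ _) hn
  have hnN₂ : N₂ ≤ n := le_trans (le_max_right _ _) hn
  have hq2 : q ^ n ≤ η / (A' * 3 ^ (h + 2) * K ^ (h + 2)) := (hN₂ n hnN₂).trans (min_le_left _ _)
  have hq3 : q ^ n ≤ δ' / (3 * K) := (hN₂ n hnN₂).trans (min_le_right _ _)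
  -- per-n objects
  set P : ℝ := q ^ n with hPdef
  have hP : 0 < P := by rw [hPdef]; exact pow_pos hq0 n
  clear_value P
  set w : ℂ := α * (u⁻¹) ^ n with hwdef
  clear_value w
  have hw0 : w ≠ 0 := by
    rw [hwdef]; exact mul_ne_zero hα (pow_ne_zero _ (inv_ne_zero hune))
  have hwnorm : ‖w‖ = ‖α‖ * P ^ m := by
    rw [hwdef, norm_mul, norm_pow, norm_inv, hPdef, hqm n]
  set z : ℂ := w / c with hzdef
  clear_value z
  have hz0 : z ≠ 0 := by rw [hzdef]; exact div_ne_zero hw0 hc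
  set ζ : ℂ := z ^ (((m:ℕ):ℂ))⁻¹ with hζdef
  clear_value ζ
  have hζm : ζ ^ m = z := by rw [hζdef]; exact Complex.cpow_nat_inv_pow z hm0
  have hζ0 : ζ ≠ 0 := by
    intro h0
    apply hz0
    rw [← hζm, h0, zero_pow hm0]
  have hζpos : 0 < ‖ζ‖ := norm_pos_iff.mpr hζ0
  have hζnorm : ‖ζ‖ = B * P := by
    refine aux_pow_eq m hm0 (norm_nonneg _) (by positivity) ?_
    rw [← norm_pow, hζm, mul_pow, hBm, hPdef, hqm n, hzdef, hwdef]
    rw [norm_div, norm_mul, norm_pow, norm_inv, norm_div]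
    ring
  set ρ : ℝ := K * P with hρdef
  clear_value ρ
  have hρpos : 0 < ρ := by rw [hρdef]; exact mul_pos hK hP
  have hρδ' : 3 * ρ ≤ δ' := by
    have h1 : P * (3 * K) ≤ δ' := (le_div_iff₀ (by positivity)).mp hq3
    calc 3 * ρ = P * (3 * K) := by rw [hρdef]; ring
      _ ≤ δ' := h1
  have hρδ : 3 * ρ ≤ δ := le_trans hρδ' hδ'le
  have hsub3 : ball (0:ℂ) ρ ⊆ ball (0:ℂ) (3*ρ) := ball_subset_ball (by linarith)
  have hsubδ : ball (0:ℂ) (3*ρ) ⊆ ball (0:ℂ) δ := ball_subset_ball hρδ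
  -- v and its bounds
  set v : ℂ → ℂ := fun t => 1 + (E n t - r t) / w with hvdef
  clear_value v
  have hEbound : ∀ t ∈ ball (0:ℂ) δ, ‖E n t‖ ≤ η * P ^ m := by
    intro t ht
    rw [hPdef, hqm n]
    exact hN₁ n hnN₁ t ht
  have hrbound : ∀ t ∈ ball (0:ℂ) (3*ρ), ‖r t‖ ≤ η * P ^ m := by
    intro t ht
    have h1 : ‖t‖ < 3*ρ := mem_ball_zero_iff.mp ht
    have h2 : A' * 3 ^ (h + 2) * K ^ (h + 2) * P ≤ η := by
      have := (le_div_iff₀ (by positivity : (0:ℝ) < A' * 3 ^ (h + 2) * K ^ (h + 2))).mp hq2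
      linarith
    calc ‖r t‖ ≤ A' * ‖t‖ ^ (h+2) := hrA' t (hsubδ ht)
      _ ≤ A' * (3*ρ) ^ (h+2) := by
          apply mul_le_mul_of_nonneg_left _ hA'pos.le
          exact pow_le_pow_left₀ (norm_nonneg t) h1.le _
      _ = (A' * 3 ^ (h + 2) * K ^ (h + 2) * P) * P ^ m := by
          rw [hρdef]
          have e1 : (3 * (K * P)) ^ (h+2) = 3 ^ (h+2) * K ^ (h+2) * P ^ (h+2) := by
            rw [mul_pow, mul_pow]; ring
          have e2 : P ^ (h+2) = P * P ^ m := by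
            rw [hmdef, pow_succ]; ring
          rw [e1, e2]; ring
      _ ≤ η * P ^ m := mul_le_mul_of_nonneg_right h2 (by positivity)
  have hv : ∀ t ∈ ball (0:ℂ) (3*ρ), ‖v t - 1‖ ≤ ε₀ := by
    intro t ht
    have h1 : v t - 1 = (E n t - r t) / w := by rw [hvdef]; ring
    rw [h1, norm_div, hwnorm, div_le_iff₀ (mul_pos hαpos (pow_pos hP m))]
    calc ‖E n t - r t‖ ≤ ‖E n t‖ + ‖r t‖ := norm_sub_le _ _
      _ ≤ η * P ^ m + η * P ^ m := add_le_add (hEbound t (hsubδ ht)) (hrbound t ht)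
      _ = ε₀ * (‖α‖ * P ^ m) := by rw [hηdef]; ring
  have hv4 : ∀ t ∈ ball (0:ℂ) (3*ρ), ‖v t - 1‖ ≤ 1/4 := fun t ht => (hv t ht).trans hε₀le
  have hvne : ∀ t ∈ ball (0:ℂ) (3*ρ), v t ≠ 0 := by
    intro t ht h0
    have h1 := hv4 t ht
    rw [h0, zero_sub, norm_neg, norm_one] at h1
    linarith
  -- f and its properties
  set f : ℂ → ℂ := fun t => ζ * (v t) ^ (((m:ℕ):ℂ))⁻¹ with hfdef
  clear_value f
  have hfm' : ∀ t : ℂ, (f t) ^ m = z * v t := by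
    intro t
    rw [hfdef]
    simp only
    rw [mul_pow, Complex.cpow_nat_inv_pow (v t) hm0, hζm]
  have hfm : ∀ t : ℂ, c * (f t) ^ m = w + (E n t - r t) := by
    intro t
    rw [hfm', hzdef, hvdef]
    simp only
    field_simp
  have hfζ : ∀ t ∈ ball (0:ℂ) (3*ρ), ‖f t - ζ‖ ≤ 2 * ε₀ * ‖ζ‖ := by
    intro t ht
    have h1 : f t - ζ = ζ * ((v t) ^ (((m:ℕ):ℂ))⁻¹ - 1) := by rw [hfdef]; ring
    rw [h1, norm_mul]
    calc ‖ζ‖ * ‖(v t) ^ (((m:ℕ):ℂ))⁻¹ - 1‖ ≤ ‖ζ‖ * (2 * ‖v t - 1‖) :=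
          mul_le_mul_of_nonneg_left (aux_cpow_root_est m hm2 (v t) (hv4 t ht)) (norm_nonneg _)
      _ ≤ ‖ζ‖ * (2 * ε₀) := by
          apply mul_le_mul_of_nonneg_left _ (norm_nonneg _)
          linarith [hv t ht]
      _ = 2 * ε₀ * ‖ζ‖ := by ring
  have hfne : ∀ t ∈ ball (0:ℂ) (3*ρ), ‖ζ‖/2 ≤ ‖f t‖ := by
    intro t ht
    have h1 := hfζ t ht
    have h4 : ‖ζ‖ ≤ ‖f t - ζ‖ + ‖f t‖ := by
      calc ‖ζ‖ = ‖f t - (f t - ζ)‖ := by congr 1; ring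
        _ ≤ ‖f t‖ + ‖f t - ζ‖ := norm_sub_le _ _
        _ = ‖f t - ζ‖ + ‖f t‖ := by ring
    have h6 : ε₀ * ‖ζ‖ ≤ 1/4 * ‖ζ‖ := mul_le_mul_of_nonneg_right hε₀le (norm_nonneg _)
    linarith
  have hfne0 : ∀ t ∈ ball (0:ℂ) (3*ρ), f t ≠ 0 := by
    intro t ht h0
    have h2 := hfne t ht
    rw [h0, norm_zero] at h2
    linarith
  have hfd : DifferentiableOn ℂ f (ball (0:ℂ) (3*ρ)) := by
    have hvd : DifferentiableOn ℂ v (ball (0:ℂ) (3*ρ)) := by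
      rw [hvdef]
      apply DifferentiableOn.const_add
      exact (((hE_hol n).mono hsubδ).sub (hr_hol.mono hsubδ)).div_const w
    rw [hfdef]
    intro t ht
    apply DifferentiableWithinAt.const_mul
    apply DifferentiableWithinAt.cpow (hvd t ht) (differentiableWithinAt_const _)
    rw [Complex.mem_slitPlane_iff]
    left
    have h1 : |(v t - 1).re| ≤ ‖v t - 1‖ := Complex.abs_re_le_norm _
    have h2 : (v t).re = 1 + (v t - 1).re := by simp
    have h3 := hv4 t ht
    rw [h2]
    have := abs_le.mp h1
    linarith
  -- Lipschitz bound via Schwarz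
  have hlip : ∀ t₁ ∈ ball (0:ℂ) ρ, ∀ t₂ ∈ ball (0:ℂ) ρ,
      dist (f t₂) (f t₁) ≤ (1/2) * dist t₂ t₁ := by
    intro t₁ ht₁ t₂ ht₂
    have h₁ : ‖t₁‖ < ρ := mem_ball_zero_iff.mp ht₁
    have h₂ : ‖t₂‖ < ρ := mem_ball_zero_iff.mp ht₂
    have hsubball : ball t₁ (2*ρ) ⊆ ball (0:ℂ) (3*ρ) := by
      intro x hx
      rw [mem_ball_zero_iff]
      have ha : ‖x - t₁‖ < 2*ρ := by rwa [mem_ball, dist_eq_norm] at hx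
      calc ‖x‖ = ‖(x - t₁) + t₁‖ := by congr 1; ring
        _ ≤ ‖x - t₁‖ + ‖t₁‖ := norm_add_le _ _
        _ < 2*ρ + ρ := by linarith
        _ = 3*ρ := by ring
    have hmaps : Set.MapsTo f (ball t₁ (2*ρ)) (ball (f t₁) (5 * ε₀ * ‖ζ‖)) := by
      intro x hx
      rw [mem_ball, dist_eq_norm]
      have e1 := hfζ x (hsubball hx)
      have e2 := hfζ t₁ (hsubball (mem_ball_self (by linarith)))
      calc ‖f x - f t₁‖ = ‖(f x - ζ) - (f t₁ - ζ)‖ := by congr 1; ring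
        _ ≤ ‖f x - ζ‖ + ‖f t₁ - ζ‖ := norm_sub_le _ _
        _ ≤ 2*ε₀*‖ζ‖ + 2*ε₀*‖ζ‖ := add_le_add e1 e2
        _ < 5 * ε₀ * ‖ζ‖ := by linarith [mul_pos hε₀pos hζpos]
    have ht₂' : t₂ ∈ ball t₁ (2*ρ) := by
      rw [mem_ball, dist_eq_norm]
      calc ‖t₂ - t₁‖ ≤ ‖t₂‖ + ‖t₁‖ := norm_sub_le _ _
        _ < 2*ρ := by linarith
    have hS := Complex.dist_le_div_mul_dist_of_mapsTo_ball (hfd.mono hsubball) (hmaps.mono_right ball_subset_closedBall) ht₂'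
    have hL : 5 * ε₀ * ‖ζ‖ / (2*ρ) ≤ 1/2 := by
      have hKB : 5 * ε₀ * B ≤ K := by
        rw [hKdef]
        have h6 : ε₀ * B ≤ 1/4 * B := mul_le_mul_of_nonneg_right hε₀le hB.le
        linarith
      have h2KP : (0:ℝ) < 2 * ρ := by linarith
      rw [div_le_iff₀ h2KP, hζnorm, hρdef]
      linarith [mul_le_mul_of_nonneg_right hKB hP.le]
    calc dist (f t₂) (f t₁) ≤ 5 * ε₀ * ‖ζ‖ / (2*ρ) * dist t₂ t₁ := hS
      _ ≤ (1/2) * dist t₂ t₁ := mul_le_mul_of_nonneg_right hL dist_nonneg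
  -- norm one of roots of unity
  have hωnorm : ∀ ω : ℂ, ω ^ m = 1 → ‖ω‖ = 1 := by
    intro ω hω
    refine aux_pow_eq m hm0 (norm_nonneg _) zero_le_one ?_
    rw [← norm_pow, hω, one_pow, norm_one]
  -- uniqueness of fixed points
  have huniq : ∀ ω : ℂ, ‖ω‖ = 1 → ∀ t ∈ ball (0:ℂ) ρ, ∀ t' ∈ ball (0:ℂ) ρ,
      ω * f t = t → ω * f t' = t' → t = t' := by
    intro ω hω t ht t' ht' hfix1 hfix2
    have h1 : dist t t' = dist (f t) (f t') := by
      conv_lhs => rw [← hfix1, ← hfix2]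
      rw [dist_eq_norm, dist_eq_norm, ← mul_sub, norm_mul, hω, one_mul]
    have h2 := hlip t' ht' t ht
    have h3 : dist t t' ≤ 1/2 * dist t t' := by
      calc dist t t' = dist (f t) (f t') := h1
        _ ≤ 1/2 * dist t t' := h2
    have h4 : (0:ℝ) ≤ dist t t' := dist_nonneg
    have h5 : dist t t' = 0 := by linarith
    exact dist_eq_zero.mp h5
  -- closed balls around the approximate roots sit inside ball 0 ρ
  have hSsub : ∀ ω : ℂ, ‖ω‖ = 1 → closedBall (ω*ζ) (‖ζ‖/2) ⊆ ball (0:ℂ) ρ := by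
    intro ω hω t ht
    rw [mem_closedBall, dist_eq_norm] at ht
    rw [mem_ball_zero_iff]
    have h2 : ‖ω*ζ‖ = ‖ζ‖ := by rw [norm_mul, hω, one_mul]
    have h3 : ‖t‖ ≤ ‖t - ω*ζ‖ + ‖ω*ζ‖ := by
      calc ‖t‖ = ‖(t - ω*ζ) + ω*ζ‖ := by congr 1; ring
        _ ≤ _ := norm_add_le _ _
    have h5 : (0:ℝ) < K - 3/2 * B := by rw [hKdef]; linarith
    have h4 : (3/2) * (B*P) < K * P := by linarith [mul_pos h5 hP]
    rw [hζnorm] at ht h2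
    rw [hρdef]
    linarith
  -- existence of fixed points (Banach)
  have hfix : ∀ ω : ℂ, ω ^ m = 1 → ∃ t, t ∈ closedBall (ω*ζ) (‖ζ‖/2) ∧ ω * f t = t := by
    intro ω hω
    have hω1 : ‖ω‖ = 1 := hωnorm ω hω
    have hS := hSsub ω hω1
    have hmaps : Set.MapsTo (fun t => ω * f t) (closedBall (ω*ζ) (‖ζ‖/2))
        (closedBall (ω*ζ) (‖ζ‖/2)) := by
      intro t ht
      have h1 : ‖f t - ζ‖ ≤ 2*ε₀*‖ζ‖ := hfζ t (hsub3 (hS ht))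
      simp only [mem_closedBall, dist_eq_norm]
      calc ‖ω * f t - ω*ζ‖ = ‖ω‖ * ‖f t - ζ‖ := by rw [← mul_sub, norm_mul]
        _ = ‖f t - ζ‖ := by rw [hω1, one_mul]
        _ ≤ 2*ε₀*‖ζ‖ := h1
        _ ≤ ‖ζ‖/2 := by linarith [mul_le_mul_of_nonneg_right hε₀le (norm_nonneg ζ)]
    have hlipS : LipschitzOnWith (1/2 : NNReal) (fun t => ω * f t)
        (closedBall (ω*ζ) (‖ζ‖/2)) := by
      apply LipschitzOnWith.of_dist_le_mul
      intro x hx y hy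
      have h1 : dist (ω * f x) (ω * f y) = dist (f x) (f y) := by
        rw [dist_eq_norm, dist_eq_norm, ← mul_sub, norm_mul, hω1, one_mul]
      have h2 := hlip y (hS hy) x (hS hx)
      calc dist ((fun t => ω * f t) x) ((fun t => ω * f t) y) = dist (f x) (f y) := h1
        _ ≤ 1/2 * dist x y := h2
        _ = ((1/2 : NNReal) : ℝ) * dist x y := by norm_num
    have hcontr : ContractingWith (1/2) (hmaps.restrict _ _ _) :=
      ⟨by exact_mod_cast (by norm_num : (1/2:ℝ) < 1), hlipS.mapsToRestrict hmaps⟩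
    obtain ⟨t, htS, htfix, -, -⟩ := ContractingWith.exists_fixedPoint'
      isClosed_closedBall.isComplete hmaps hcontr
      (mem_closedBall_self (by positivity)) (edist_ne_top _ _)
    exact ⟨t, htS, htfix⟩
  choose! FP hFPS hFPfix using hfix
  -- characterization of the equation
  have heq : ∀ t : ℂ, (γ n (y₀ + t) = φ (y₀ + t)) ↔ w + E n t = c * t ^ m + r t := by
    intro t
    rw [hγ n t, hφ t, hwdef]
  have hsolball : ∀ t : ℂ, t ∈ ball (0:ℂ) δ' → w + E n t = c * t ^ m + r t →
      t ∈ ball (0:ℂ) ρ := by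
    intro t ht heqn
    have htδ : t ∈ ball (0:ℂ) δ := ball_subset_ball hδ'le ht
    have htn : ‖t‖ < δ' := mem_ball_zero_iff.mp ht
    have h1 : c * t ^ m = w + E n t - r t := by linear_combination -heqn
    have h2 : ‖c‖ * ‖t‖^m ≤ ‖w‖ + ‖E n t‖ + ‖r t‖ := by
      calc ‖c‖ * ‖t‖^m = ‖c * t^m‖ := by rw [norm_mul, norm_pow]
        _ = ‖w + E n t - r t‖ := by rw [h1]
        _ ≤ ‖w + E n t‖ + ‖r t‖ := norm_sub_le _ _
        _ ≤ ‖w‖ + ‖E n t‖ + ‖r t‖ := by linarith [norm_add_le w (E n t)]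
    have hEb : ‖E n t‖ ≤ ‖α‖ * P^m := by
      have hEt := hEbound t htδ
      have hηα : η ≤ ‖α‖ := by
        rw [hηdef]
        have h6 : ‖α‖ * ε₀ ≤ ‖α‖ * (1/4) := mul_le_mul_of_nonneg_left hε₀le hαpos.le
        linarith
      linarith [mul_le_mul_of_nonneg_right hηα (pow_pos hP m).le, hEt]
    have hrb : ‖r t‖ ≤ ‖c‖/2 * ‖t‖^m := by
      calc ‖r t‖ ≤ A' * ‖t‖^(h+2) := hrA' t htδ
        _ = A' * ‖t‖ * ‖t‖^m := by rw [hmdef, pow_succ]; ring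
        _ ≤ A' * δ' * ‖t‖^m := by
            apply mul_le_mul_of_nonneg_right _ (pow_nonneg (norm_nonneg t) m)
            exact mul_le_mul_of_nonneg_left htn.le hA'pos.le
        _ ≤ ‖c‖/2 * ‖t‖^m := mul_le_mul_of_nonneg_right hδ'c (pow_nonneg (norm_nonneg t) m)
    have h3 : ‖c‖/2 * ‖t‖^m ≤ 2*‖α‖ * P^m := by
      rw [hwnorm] at h2; linarith
    have h4 : ‖t‖^m ≤ (K₀ * P)^m := by
      rw [mul_pow, hK₀m, div_mul_eq_mul_div, le_div_iff₀ hcpos]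
      linarith [h3]
    have h5 : ‖t‖ ≤ K₀ * P :=
      (pow_le_pow_iff_left₀ (norm_nonneg t) (by positivity) hm0).mp h4
    rw [mem_ball_zero_iff, hρdef]
    have h6 : K₀ * P < K * P := by
      have h7 : (0:ℝ) < K - K₀ := by rw [hKdef]; linarith
      linarith [mul_pos h7 hP]
    linarith
  have hsolfix : ∀ t : ℂ, t ∈ ball (0:ℂ) ρ → w + E n t = c * t ^ m + r t →
      (t / f t) ^ m = 1 ∧ (t / f t) * f t = t := by
    intro t ht heqn
    have ht3 : t ∈ ball (0:ℂ) (3*ρ) := hsub3 ht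
    have hft0 : f t ≠ 0 := hfne0 t ht3
    have h1 : c * t ^ m = c * (f t) ^ m := by
      rw [hfm t]; linear_combination -heqn
    have h2 : t ^ m = (f t) ^ m := mul_left_cancel₀ hc h1
    constructor
    · rw [div_pow, h2, div_self (pow_ne_zero _ hft0)]
    · exact div_mul_cancel₀ t hft0
  have hmpos : 0 < m := Nat.pos_of_ne_zero hm0
  have hρδ'2 : ρ ≤ δ' := by linarith
  -- the finset of solutions
  set T : Finset ℂ := (Polynomial.nthRootsFinset m (1:ℂ)).image FP with hTdef
  have hsetEq : (↑T : Set ℂ) = {t : ℂ | t ∈ ball (0 : ℂ) δ' ∧ γ n (y₀ + t) = φ (y₀ + t)} := by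
    ext t
    simp only [hTdef, Finset.coe_image, Set.mem_image, Finset.mem_coe, Set.mem_setOf_eq]
    constructor
    · rintro ⟨ω, hωmem, rfl⟩
      have hω1 : ω ^ m = 1 := (Polynomial.mem_nthRootsFinset hmpos (1:ℂ)).mp hωmem
      have hFPball : FP ω ∈ ball (0:ℂ) ρ := hSsub ω (hωnorm ω hω1) (hFPS ω hω1)
      refine ⟨ball_subset_ball hρδ'2 hFPball, ?_⟩
      rw [heq (FP ω)]
      have hfixω := hFPfix ω hω1
      have h2 : (FP ω) ^ m = (f (FP ω)) ^ m := by
        conv_lhs => rw [← hfixω]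
        rw [mul_pow, hω1, one_mul]
      have h3 := hfm (FP ω)
      linear_combination (-c) * h2 - h3
    · rintro ⟨htb, hteq⟩
      have heqn : w + E n t = c * t ^ m + r t := (heq t).mp hteq
      have htρ : t ∈ ball (0:ℂ) ρ := hsolball t htb heqn
      obtain ⟨hω1, hωfix⟩ := hsolfix t htρ heqn
      refine ⟨t / f t, (Polynomial.mem_nthRootsFinset hmpos (1:ℂ)).mpr hω1, ?_⟩
      have hFPball : FP (t/f t) ∈ ball (0:ℂ) ρ := hSsub _ (hωnorm _ hω1) (hFPS _ hω1)
      exact huniq (t/f t) (hωnorm _ hω1) (FP (t/f t)) hFPball t htρ (hFPfix _ hω1) hωfix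
  have hTprop : ∀ t ∈ T, t ∈ ball (0:ℂ) ρ ∧ (t / f t) ^ m = 1 ∧ (t / f t) * f t = t := by
    intro t htT
    have h0 : t ∈ (↑T : Set ℂ) := htT
    rw [hsetEq] at h0
    obtain ⟨htb, hteq⟩ := h0
    have heqn := (heq t).mp hteq
    have htρ := hsolball t htb heqn
    exact ⟨htρ, hsolfix t htρ heqn⟩
  have hFPinj : Set.InjOn FP ↑(Polynomial.nthRootsFinset m (1:ℂ)) := by
    intro ω₁ h₁ ω₂ h₂ hFPeq
    have hω₁ : ω₁ ^ m = 1 := (Polynomial.mem_nthRootsFinset hmpos (1:ℂ)).mp (Finset.mem_coe.mp h₁)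
    have hω₂ : ω₂ ^ m = 1 := (Polynomial.mem_nthRootsFinset hmpos (1:ℂ)).mp (Finset.mem_coe.mp h₂)
    have hft0 : f (FP ω₂) ≠ 0 :=
      hfne0 _ (hsub3 (hSsub ω₂ (hωnorm _ hω₂) (hFPS ω₂ hω₂)))
    have e₁ := hFPfix ω₁ hω₁
    have e₂ := hFPfix ω₂ hω₂
    rw [hFPeq] at e₁
    exact mul_right_cancel₀ hft0 (e₁.trans e₂.symm)
  refine ⟨T, hsetEq, ?_, ζ, by rw [hζm, hzdef, hwdef], fun t => t / f t, ?_, ?_⟩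
  · rw [hTdef, Finset.card_image_of_injOn hFPinj,
      (Complex.isPrimitiveRoot_exp m hm0).card_nthRootsFinset]
  · intro t₁ ht₁ t₂ ht₂ hg
    obtain ⟨hb₁, hω₁, hf₁⟩ := hTprop t₁ (Finset.mem_coe.mp ht₁)
    obtain ⟨hb₂, hω₂, hf₂⟩ := hTprop t₂ (Finset.mem_coe.mp ht₂)
    simp only at hg
    apply huniq (t₁ / f t₁) (hωnorm _ hω₁) t₁ hb₁ t₂ hb₂ hf₁
    rw [hg]
    exact hf₂
  · intro t htT
    obtain ⟨hb, hω, hf⟩ := hTprop t htT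
    refine ⟨hω, ?_⟩
    have h1 : ‖t / f t‖ = 1 := hωnorm _ hω
    have h2 : t - (t / f t) * ζ = (t / f t) * (f t - ζ) := by
      linear_combination (-1 : ℂ) * hf
    rw [h2, norm_mul, h1, one_mul]
    have h3 := hfζ t (hsub3 hb)
    rw [hζnorm] at h3
    have h4 : 2*ε₀*(B*P) ≤ κ * P := by
      linarith [mul_le_mul_of_nonneg_right hε₀κ hP.le]
    calc ‖f t - ζ‖ ≤ 2*ε₀*(B*P) := h3
      _ ≤ κ * P := h4
      _ = κ * ‖u‖ ^ (-(n : ℝ) / ((h:ℝ)+1)) := by rw [hPdef, hqeq n]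
end

section
/- Let |u| > 1, h ≥ 1, c ≠ 0, α ≠ 0, ε ∈ (0, (1/10)|α/c|^{1/(h+1)}), and A, δ > 0. Suppose φ(t) = c·t^{h+1} + r(t) with |r(t)| ≤ A|t|^{h+2} on a disk D(0, δ), and γ_n(t) = α·u^{-n} + ε_n(t) with sup |ε_n| = o(|u|^{-n}). Then there exist constants C₁, C₂ > 0 (depending only on ε and the data) such that for all sufficiently large n and all t₀ with |t₀| ≤ ε|u|^{-n/(h+1)}, one has C₁|u|^{-n} ≤ inf_{|t|≤δ} max(|γ_n(t₀) - φ(t)|, |t - t₀|) ≤ C₂|u|^{-n}. -/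
open Metric

set_option maxHeartbeats 1000000 in
/-- Distance estimate (Lemma 5.2): for points `r_n = (γ_n(y₀+t₀), y₀+t₀)` on the
pulled-back stable graph with `|t₀| ≤ ε|u|^{-n/(h+1)}`, the sup-norm distance
from `r_n` to the curve `x = φ(t) = c t^{h+1} + O(t^{h+2})` is `≍ |u|^{-n}`. -/
theorem stmt_15 (u c α : ℂ) (hu : 1 < ‖u‖) (h : ℕ) (hh : 1 ≤ h)
    (hc : c ≠ 0) (hα : α ≠ 0) (e A δ : ℝ) (hA : 0 < A) (hδ : 0 < δ)
    (he0 : 0 < e) (he : e < (1 / 10) * ‖α / c‖ ^ ((1 : ℝ) / (h + 1)))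
    (r : ℂ → ℂ) (hr : ∀ t ∈ closedBall (0 : ℂ) δ, ‖r t‖ ≤ A * ‖t‖ ^ (h + 2))
    (φ : ℂ → ℂ) (hφ : ∀ t, φ t = c * t ^ (h + 1) + r t)
    (E : ℕ → ℂ → ℂ)
    (hE : ∀ η : ℝ, 0 < η → ∃ N : ℕ, ∀ n ≥ N, ∀ t ∈ closedBall (0 : ℂ) δ,
      ‖E n t‖ ≤ η * ‖u‖⁻¹ ^ n)
    (γ : ℕ → ℂ → ℂ) (hγ : ∀ n t, γ n t = α * (u⁻¹) ^ n + E n t) :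
    ∃ C₁ C₂ : ℝ, 0 < C₁ ∧ 0 < C₂ ∧ ∃ N : ℕ, ∀ n ≥ N, ∀ t₀ : ℂ,
      ‖t₀‖ ≤ e * ‖u‖ ^ (-(n : ℝ) / (h + 1)) →
      C₁ * ‖u‖⁻¹ ^ n ≤
          sInf ((fun t => max ‖γ n t₀ - φ t‖ ‖t - t₀‖) '' closedBall (0 : ℂ) δ) ∧
        sInf ((fun t => max ‖γ n t₀ - φ t‖ ‖t - t₀‖) '' closedBall (0 : ℂ) δ) ≤
          C₂ * ‖u‖⁻¹ ^ n := by
  have hu0 : (0:ℝ) < ‖u‖ := lt_trans one_pos hu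
  have ha : (0:ℝ) < ‖α‖ := norm_pos_iff.mpr hα
  have hcn : (0:ℝ) < ‖c‖ := norm_pos_iff.mpr hc
  have hq0 : (0:ℝ) < ‖u‖⁻¹ := inv_pos.mpr hu0
  have hq1 : ‖u‖⁻¹ < 1 := inv_lt_one_of_one_lt₀ hu
  have hP : ((h:ℝ)+1) ≠ 0 := by positivity
  set q : ℝ := ‖u‖⁻¹ with hqdef
  set ρ : ℕ → ℝ := fun n => ‖u‖ ^ (-(n:ℝ)/(h+1)) with hρdef
  have hρ0 : ∀ n, 0 < ρ n := fun n => Real.rpow_pos_of_pos hu0 _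
  have hρ1 : ∀ n, ρ n ≤ 1 := by
    intro n
    apply Real.rpow_le_one_of_one_le_of_nonpos hu.le
    apply div_nonpos_of_nonpos_of_nonneg (neg_nonpos.mpr (Nat.cast_nonneg n))
    positivity
  have hpow : ∀ n : ℕ, ρ n ^ (h+1) = q ^ n := by
    intro n
    rw [show ρ n ^ (h+1) = (ρ n) ^ ((h+1 : ℕ) : ℝ) by rw [Real.rpow_natCast]]
    rw [hρdef]
    rw [← Real.rpow_mul hu0.le]
    rw [show (-(n:ℝ)/((h:ℝ)+1)) * ((h+1 : ℕ) : ℝ) = -(n:ℝ) by push_cast; field_simp]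
    rw [Real.rpow_neg hu0.le, Real.rpow_natCast, hqdef, inv_pow]
  have hqρ : ∀ n : ℕ, q ^ n ≤ ρ n := by
    intro n
    have h1 : q ^ n = ‖u‖ ^ (-(n:ℝ)) := by
      rw [Real.rpow_neg hu0.le, Real.rpow_natCast, hqdef, inv_pow]
    rw [h1, hρdef]
    apply Real.rpow_le_rpow_of_exponent_le hu.le
    rw [neg_div]
    apply neg_le_neg
    refine div_le_self (Nat.cast_nonneg n) ?_
    have : (0:ℝ) ≤ h := Nat.cast_nonneg h
    linarith
  -- key constant inequality from he
  have hX : (‖α / c‖ ^ ((1:ℝ)/(h+1))) ^ (h+1) = ‖α‖ / ‖c‖ := by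
    rw [show (‖α / c‖ ^ ((1:ℝ)/(h+1))) ^ (h+1)
        = (‖α / c‖ ^ ((1:ℝ)/(h+1))) ^ ((h+1 : ℕ) : ℝ) by rw [Real.rpow_natCast]]
    rw [← Real.rpow_mul (norm_nonneg _)]
    rw [show (1:ℝ)/((h:ℝ)+1) * ((h+1 : ℕ) : ℝ) = 1 by push_cast; field_simp]
    rw [Real.rpow_one, norm_div]
  have he1 : e ^ (h+1) * ‖c‖ < (1/10:ℝ)^(h+1) * ‖α‖ := by
    have h1 : e ^ (h+1) < ((1/10) * ‖α / c‖ ^ ((1:ℝ)/(h+1))) ^ (h+1) :=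
      pow_lt_pow_left₀ he he0.le (by omega)
    rw [mul_pow, hX] at h1
    calc e ^ (h+1) * ‖c‖ < ((1/10:ℝ)^(h+1) * (‖α‖/‖c‖)) * ‖c‖ :=
          mul_lt_mul_of_pos_right h1 hcn
      _ = (1/10:ℝ)^(h+1) * ‖α‖ := by rw [mul_assoc, div_mul_cancel₀ _ (ne_of_gt hcn)]
  have h15 : ((1:ℝ)/5)^(h+1) ≤ 1/25 := by
    calc ((1:ℝ)/5)^(h+1) ≤ ((1:ℝ)/5)^2 :=
          pow_le_pow_of_le_one (by norm_num) (by norm_num) (by omega)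
      _ = 1/25 := by norm_num
  have hce : ‖c‖ * (2*e)^(h+1) ≤ ‖α‖/25 := by
    have h1 : ‖c‖ * (2*e)^(h+1) = 2^(h+1) * (e^(h+1) * ‖c‖) := by rw [mul_pow]; ring
    have h2 : (2:ℝ)^(h+1) * (1/10:ℝ)^(h+1) = ((1:ℝ)/5)^(h+1) := by
      rw [← mul_pow]; norm_num
    have h3 : (0:ℝ) < 2^(h+1) := by positivity
    calc ‖c‖ * (2*e)^(h+1) = 2^(h+1) * (e^(h+1) * ‖c‖) := h1
      _ ≤ 2^(h+1) * ((1/10:ℝ)^(h+1) * ‖α‖) :=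
          mul_le_mul_of_nonneg_left he1.le h3.le
      _ = ((1:ℝ)/5)^(h+1) * ‖α‖ := by rw [← mul_assoc, h2]
      _ ≤ (1/25) * ‖α‖ := mul_le_mul_of_nonneg_right h15 ha.le
      _ = ‖α‖/25 := by ring
  -- choose N
  obtain ⟨N₁, hN₁⟩ := hE (‖α‖/4) (by positivity)
  set m : ℝ := min (δ/e) ((‖α‖/8)/(A*(2*e)^(h+2))) with hmdef
  have hm0 : 0 < m := by
    apply lt_min (by positivity)
    positivity
  have hexp : ∀ n : ℕ, -(n:ℝ)/((h:ℝ)+1) = (-(1:ℝ)/((h:ℝ)+1)) * ((n:ℕ):ℝ) := by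
    intro n; ring
  have hρeq : ∀ n : ℕ, ρ n = (‖u‖ ^ (-(1:ℝ)/((h:ℝ)+1))) ^ n := by
    intro n
    simp only [hρdef]
    rw [hexp n, Real.rpow_mul hu0.le, Real.rpow_natCast]
  have hρtend : Filter.Tendsto ρ Filter.atTop (nhds 0) := by
    have h1 : Filter.Tendsto (fun n : ℕ => (‖u‖ ^ (-(1:ℝ)/((h:ℝ)+1))) ^ n)
        Filter.atTop (nhds 0) := by
      apply tendsto_pow_atTop_nhds_zero_of_lt_one (by positivity)
      apply Real.rpow_lt_one_of_one_lt_of_neg hu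
      rw [neg_div, neg_lt_zero]
      positivity
    exact h1.congr (fun n => (hρeq n).symm)
  obtain ⟨N₂, hN₂⟩ := Filter.eventually_atTop.mp (hρtend.eventually_lt_const hm0)
  refine ⟨min e (‖α‖/2), ‖α‖ + ‖α‖/4 + ‖c‖ * e^(h+1) + A * e^(h+2),
    lt_min he0 (by positivity), by positivity, max N₁ N₂, ?_⟩
  intro n hn t₀ ht₀
  have hn₁ : N₁ ≤ n := le_trans (le_max_left _ _) hn
  have hn₂ : N₂ ≤ n := le_trans (le_max_right _ _) hn
  have hρm : ρ n < m := hN₂ n hn₂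
  have hqn : (0:ℝ) < q ^ n := by positivity
  set C₁ : ℝ := min e (‖α‖/2) with hC₁def
  have hC₁e : C₁ ≤ e := min_le_left _ _
  have hC₁α : C₁ ≤ ‖α‖/2 := min_le_right _ _
  have hC₁0 : 0 < C₁ := lt_min he0 (by positivity)
  have ht₀ρ : ‖t₀‖ ≤ e * ρ n := ht₀
  have ht₀δ : ‖t₀‖ ≤ δ := by
    calc ‖t₀‖ ≤ e * ρ n := ht₀ρ
      _ ≤ e * (δ/e) := by
          apply mul_le_mul_of_nonneg_left _ he0.le
          exact le_trans hρm.le (min_le_left _ _)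
      _ = δ := by field_simp
  have ht₀mem : t₀ ∈ closedBall (0:ℂ) δ := by
    rw [mem_closedBall, dist_zero_right]; exact ht₀δ
  have hEn : ‖E n t₀‖ ≤ ‖α‖/4 * q^n := hN₁ n hn₁ t₀ ht₀mem
  have hαn : ‖α * u⁻¹ ^ n‖ = ‖α‖ * q^n := by
    rw [norm_mul, norm_pow, norm_inv]
  -- bounds on powers of ‖t₀‖
  have ht₀p1 : ‖t₀‖^(h+1) ≤ e^(h+1) * q^n := by
    calc ‖t₀‖^(h+1) ≤ (e * ρ n)^(h+1) := pow_le_pow_left₀ (norm_nonneg _) ht₀ρ _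
      _ = e^(h+1) * (ρ n)^(h+1) := mul_pow _ _ _
      _ = e^(h+1) * q^n := by rw [hpow]
  have ht₀p2 : ‖t₀‖^(h+2) ≤ e^(h+2) * q^n := by
    calc ‖t₀‖^(h+2) ≤ (e * ρ n)^(h+2) := pow_le_pow_left₀ (norm_nonneg _) ht₀ρ _
      _ = e^(h+2) * ((ρ n)^(h+1) * ρ n) := by rw [mul_pow]; ring
      _ = e^(h+2) * (q^n * ρ n) := by rw [hpow]
      _ ≤ e^(h+2) * (q^n * 1) := by
          apply mul_le_mul_of_nonneg_left _ (by positivity)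
          exact mul_le_mul_of_nonneg_left (hρ1 n) hqn.le
      _ = e^(h+2) * q^n := by ring
  set S := ((fun t => max ‖γ n t₀ - φ t‖ ‖t - t₀‖) '' closedBall (0:ℂ) δ) with hSdef
  have hS_ne : S.Nonempty := ⟨_, ⟨0, mem_closedBall_self hδ.le, rfl⟩⟩
  have hS_bdd : BddBelow S := by
    refine ⟨0, ?_⟩
    rintro x ⟨t, -, rfl⟩
    exact le_trans (norm_nonneg _) (le_max_left _ _)
  constructor
  · -- lower bound
    apply le_csInf hS_ne
    rintro x ⟨t, htmem, rfl⟩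
    rw [mem_closedBall, dist_zero_right] at htmem
    rcases le_or_gt (C₁ * q^n) ‖t - t₀‖ with hcase | hcase
    · exact le_trans hcase (le_max_right _ _)
    · refine le_trans ?_ (le_max_left _ _)
      have htb : ‖t‖ ≤ 2*e * ρ n := by
        have h1 : ‖t‖ ≤ ‖t₀‖ + ‖t - t₀‖ := by
          simpa using norm_add_le t₀ (t - t₀)
        have h2 : C₁ * q^n ≤ e * ρ n := by
          calc C₁ * q^n ≤ e * q^n := mul_le_mul_of_nonneg_right hC₁e hqn.le
            _ ≤ e * ρ n := mul_le_mul_of_nonneg_left (hqρ n) he0.le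
        calc ‖t‖ ≤ ‖t₀‖ + ‖t - t₀‖ := h1
          _ ≤ e * ρ n + e * ρ n := add_le_add ht₀ρ (le_trans hcase.le h2)
          _ = 2*e * ρ n := by ring
      have htp1 : ‖t‖^(h+1) ≤ (2*e)^(h+1) * q^n := by
        calc ‖t‖^(h+1) ≤ (2*e * ρ n)^(h+1) := pow_le_pow_left₀ (norm_nonneg _) htb _
          _ = (2*e)^(h+1) * (ρ n)^(h+1) := mul_pow _ _ _
          _ = (2*e)^(h+1) * q^n := by rw [hpow]
      have htp2 : ‖t‖^(h+2) ≤ (2*e)^(h+2) * ρ n * q^n := by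
        calc ‖t‖^(h+2) ≤ (2*e * ρ n)^(h+2) := pow_le_pow_left₀ (norm_nonneg _) htb _
          _ = (2*e)^(h+2) * ((ρ n)^(h+1) * ρ n) := by rw [mul_pow]; ring
          _ = (2*e)^(h+2) * (q^n * ρ n) := by rw [hpow]
          _ = (2*e)^(h+2) * ρ n * q^n := by ring
      have hrt : ‖r t‖ ≤ ‖α‖/8 * q^n := by
        have h1 : A * (2*e)^(h+2) * ρ n ≤ ‖α‖/8 := by
          have h2 : ρ n ≤ (‖α‖/8)/(A*(2*e)^(h+2)) :=
            le_trans hρm.le (min_le_right _ _)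
          calc A * (2*e)^(h+2) * ρ n ≤ A * (2*e)^(h+2) * ((‖α‖/8)/(A*(2*e)^(h+2))) :=
                mul_le_mul_of_nonneg_left h2 (by positivity)
            _ = ‖α‖/8 := by field_simp
        calc ‖r t‖ ≤ A * ‖t‖^(h+2) :=
              hr t (by rw [mem_closedBall, dist_zero_right]; exact htmem)
          _ ≤ A * ((2*e)^(h+2) * ρ n * q^n) := mul_le_mul_of_nonneg_left htp2 hA.le
          _ = (A * (2*e)^(h+2) * ρ n) * q^n := by ring
          _ ≤ ‖α‖/8 * q^n := mul_le_mul_of_nonneg_right h1 hqn.le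
      have hct : ‖c * t^(h+1)‖ ≤ ‖α‖/25 * q^n := by
        rw [norm_mul, norm_pow]
        calc ‖c‖ * ‖t‖^(h+1) ≤ ‖c‖ * ((2*e)^(h+1) * q^n) :=
              mul_le_mul_of_nonneg_left htp1 hcn.le
          _ = (‖c‖ * (2*e)^(h+1)) * q^n := by ring
          _ ≤ ‖α‖/25 * q^n := mul_le_mul_of_nonneg_right hce hqn.le
      have key : ‖α‖ * q^n - (‖E n t₀‖ + ‖c * t^(h+1)‖ + ‖r t‖) ≤ ‖γ n t₀ - φ t‖ := by
        rw [hγ, hφ]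
        have heq : α * u⁻¹^n + E n t₀ - (c * t^(h+1) + r t)
            = α * u⁻¹^n - (c * t^(h+1) + r t - E n t₀) := by ring
        rw [heq]
        have h1 : ‖c * t^(h+1) + r t - E n t₀‖ ≤ ‖c * t^(h+1)‖ + ‖r t‖ + ‖E n t₀‖ :=
          le_trans (norm_sub_le _ _) (by gcongr; exact norm_add_le _ _)
        have h2 : ‖α * u⁻¹^n‖ - ‖c * t^(h+1) + r t - E n t₀‖
            ≤ ‖α * u⁻¹^n - (c * t^(h+1) + r t - E n t₀)‖ := norm_sub_norm_le _ _
        rw [hαn] at h2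
        linarith
      have hhalf : C₁ * q^n ≤ ‖α‖/2 * q^n := mul_le_mul_of_nonneg_right hC₁α hqn.le
      have hαq : (0:ℝ) ≤ ‖α‖ * q^n := by positivity
      nlinarith [hEn, hct, hrt, key, hhalf, hαq]
  · -- upper bound
    apply csInf_le_of_le hS_bdd ⟨t₀, ht₀mem, rfl⟩
    have hmax : max ‖γ n t₀ - φ t₀‖ ‖t₀ - t₀‖ = ‖γ n t₀ - φ t₀‖ := by
      rw [sub_self, norm_zero]
      exact max_eq_left (norm_nonneg _)
    show max ‖γ n t₀ - φ t₀‖ ‖t₀ - t₀‖ ≤ _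
    rw [hmax, hγ, hφ]
    have h1 : ‖α * u⁻¹^n + E n t₀ - (c * t₀^(h+1) + r t₀)‖
        ≤ ‖α * u⁻¹^n‖ + ‖E n t₀‖ + (‖c * t₀^(h+1)‖ + ‖r t₀‖) :=
      le_trans (norm_sub_le _ _) (add_le_add (norm_add_le _ _) (norm_add_le _ _))
    have h2 : ‖c * t₀^(h+1)‖ ≤ ‖c‖ * e^(h+1) * q^n := by
      rw [norm_mul, norm_pow]
      calc ‖c‖ * ‖t₀‖^(h+1) ≤ ‖c‖ * (e^(h+1) * q^n) :=
            mul_le_mul_of_nonneg_left ht₀p1 hcn.le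
        _ = ‖c‖ * e^(h+1) * q^n := by ring
    have h3 : ‖r t₀‖ ≤ A * e^(h+2) * q^n := by
      calc ‖r t₀‖ ≤ A * ‖t₀‖^(h+2) := hr t₀ ht₀mem
        _ ≤ A * (e^(h+2) * q^n) := mul_le_mul_of_nonneg_left ht₀p2 hA.le
        _ = A * e^(h+2) * q^n := by ring
    rw [hαn] at h1
    calc ‖α * u⁻¹^n + E n t₀ - (c * t₀^(h+1) + r t₀)‖
        ≤ ‖α‖ * q^n + ‖α‖/4 * q^n + (‖c‖ * e^(h+1) * q^n + A * e^(h+2) * q^n) := by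
          linarith
      _ = (‖α‖ + ‖α‖/4 + ‖c‖ * e^(h+1) + A * e^(h+2)) * q^n := by ring
end

section
/- Let m ≥ 1 be an integer, |u₀| > 1, and let x, α, v : D(0, R) → ℂ be holomorphic with x(λ) = λ^m + O(λ^{m+1}), α(0) ≠ 0 and |α(λ) - α(0)| ≤ |α(0)|/10, and v(λ) = u₀(1 + O(λ)) with v nonvanishing. Then for every δ < |u₀|^{-1} and all sufficiently large n, the equation x(λ) = α(λ)·v(λ)^{-n} has at least m distinct solutions λ in the disk D(0, C|u₀|^{-n/m}) for some constant C independent of n. -/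
open Metric Polynomial Finset

section Aux

lemma aux_exists_zero (f : ℂ → ℂ) (c : ℂ) (r : ℝ) (hr : 0 < r)
    (hf : DifferentiableOn ℂ f (closedBall c r))
    (hlt : ∀ z ∈ sphere c r, ‖f c‖ < ‖f z‖) :
    ∃ z ∈ closedBall c r, f z = 0 := by
  by_contra h
  push_neg at h
  have hcl : closure (ball c r) = closedBall c r := closure_ball c hr.ne'
  have hgdiff : DifferentiableOn ℂ (fun z => (f z)⁻¹) (closedBall c r) := hf.inv h
  have hgd : DiffContOnCl ℂ (fun z => (f z)⁻¹) (ball c r) := by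
    apply DifferentiableOn.diffContOnCl
    rwa [hcl]
  have hsc : IsCompact (sphere c r) := isCompact_sphere c r
  have hsn : (sphere c r).Nonempty := NormedSpace.sphere_nonempty.2 hr.le
  have hfc : ContinuousOn (fun z => ‖f z‖) (sphere c r) :=
    (hf.continuousOn.mono sphere_subset_closedBall).norm
  obtain ⟨z₀, hz₀s, hz₀min⟩ := hsc.exists_isMinOn hsn hfc
  have hz₀pos : 0 < ‖f z₀‖ := lt_of_le_of_lt (norm_nonneg _) (hlt z₀ hz₀s)
  have hfcball : c ∈ closedBall c r := mem_closedBall_self hr.le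
  have hfcpos : 0 < ‖f c‖ := norm_pos_iff.2 (h c hfcball)
  have hmax : ‖(f c)⁻¹‖ ≤ ‖f z₀‖⁻¹ := by
    apply Complex.norm_le_of_forall_mem_frontier_norm_le isBounded_ball hgd
      (fun z hz => ?_) (by rw [hcl]; exact hfcball)
    rw [frontier_ball c hr.ne'] at hz
    have h2 : ‖f z₀‖ ≤ ‖f z‖ := hz₀min hz
    rw [norm_inv]
    exact inv_anti₀ hz₀pos h2
  rw [norm_inv] at hmax
  have := (inv_le_inv₀ hfcpos hz₀pos).mp hmax
  exact absurd (hlt z₀ hz₀s) (not_lt.2 this)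

lemma aux_pow_sub_one {w : ℂ} {ε : ℝ} (hw : ‖w - 1‖ ≤ ε) :
    ∀ n : ℕ, ‖w ^ n - 1‖ ≤ n * ε * (1 + ε) ^ n := by
  have hε : 0 ≤ ε := le_trans (norm_nonneg _) hw
  have hwle : ‖w‖ ≤ 1 + ε := by
    have := norm_add_le (w - 1) 1
    simp only [sub_add_cancel, norm_one] at this
    linarith
  intro n
  induction n with
  | zero => simp
  | succ n ih =>
    have key : w ^ (n + 1) - 1 = w ^ n * (w - 1) + (w ^ n - 1) := by ring
    have h1 : ‖w ^ n * (w - 1)‖ ≤ (1 + ε) ^ n * ε := by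
      rw [norm_mul, norm_pow]
      exact mul_le_mul (pow_le_pow_left₀ (norm_nonneg _) hwle n) hw (norm_nonneg _)
        (pow_nonneg (by linarith) n)
    have h2 : (1 + ε) ^ n ≤ (1 + ε) ^ (n + 1) :=
      pow_le_pow_right₀ (by linarith) (Nat.le_succ n)
    calc ‖w ^ (n + 1) - 1‖ ≤ ‖w ^ n * (w - 1)‖ + ‖w ^ n - 1‖ := by
          rw [key]; exact norm_add_le _ _
    _ ≤ (1 + ε) ^ n * ε + n * ε * (1 + ε) ^ n := by linarith
    _ = (n + 1) * ε * (1 + ε) ^ n := by ring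
    _ ≤ (n + 1) * ε * (1 + ε) ^ (n + 1) :=
          mul_le_mul_of_nonneg_left h2 (by positivity)
    _ = (↑(n + 1)) * ε * (1 + ε) ^ (n + 1) := by push_cast; ring

lemma aux_inv_pow_sub_one {w : ℂ} {ε : ℝ} {n : ℕ} (hw : ‖w - 1‖ ≤ ε)
    (h8 : (n : ℝ) * ε ≤ 1 / 8) (hw0 : w ≠ 0) :
    ‖(w⁻¹) ^ n - 1‖ ≤ 3 * n * ε := by
  have hε : 0 ≤ ε := le_trans (norm_nonneg _) hw
  rcases Nat.eq_zero_or_pos n with rfl | hn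
  · simp
  have hε8 : ε ≤ 1 / 8 := by
    have : (1:ℝ) ≤ n := by exact_mod_cast hn
    nlinarith
  have hb : (7:ℝ) / 8 ≤ (1 - ε) ^ n := by
    have := one_add_mul_le_pow (a := -ε) (by linarith) n
    simp only [mul_neg, ← sub_eq_add_neg] at this
    nlinarith
  have hppos : (0:ℝ) ≤ (1 + ε) ^ n := by positivity
  have hprod : (1 + ε) ^ n * (1 - ε) ^ n ≤ 1 := by
    rw [← mul_pow]
    have h01 : (1 + ε) * (1 - ε) ≤ 1 := by nlinarith
    have h00 : 0 ≤ (1 + ε) * (1 - ε) := by nlinarith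
    exact pow_le_one₀ h00 h01
  have hup : (1 + ε) ^ n ≤ 8 / 7 := by nlinarith
  have hA' : ‖w ^ n - 1‖ ≤ (8 / 7) * (n * ε) := by
    calc ‖w ^ n - 1‖ ≤ n * ε * (1 + ε) ^ n := aux_pow_sub_one hw n
    _ ≤ n * ε * (8 / 7) := mul_le_mul_of_nonneg_left hup (by positivity)
    _ = (8 / 7) * (n * ε) := by ring
  have hwn : (6:ℝ) / 7 ≤ ‖w ^ n‖ := by
    have h1 : ‖(1:ℂ)‖ - ‖w ^ n - 1‖ ≤ ‖w ^ n‖ := by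
      have h2 : ‖(1:ℂ) - w ^ n‖ = ‖w ^ n - 1‖ := norm_sub_rev _ _
      linarith [norm_sub_norm_le (1:ℂ) (w ^ n), h2 ▸ norm_sub_norm_le (1:ℂ) (w ^ n)]
    rw [norm_one] at h1
    nlinarith
  have hkey : (w⁻¹) ^ n - 1 = (1 - w ^ n) * (w ^ n)⁻¹ := by
    rw [inv_pow, sub_mul, one_mul, mul_inv_cancel₀ (pow_ne_zero n hw0)]
  rw [hkey, norm_mul, norm_inv, norm_sub_rev]
  have hwnpos : (0:ℝ) < ‖w ^ n‖ := by linarith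
  calc ‖w ^ n - 1‖ * ‖w ^ n‖⁻¹ ≤ ((8 / 7) * (n * ε)) * (6 / 7)⁻¹ := by
        apply mul_le_mul hA' _ (inv_nonneg.2 hwnpos.le) (by positivity)
        exact inv_anti₀ (by norm_num) hwn
  _ = (4 / 3) * (n * ε) := by ring
  _ ≤ 3 * n * ε := by nlinarith [mul_nonneg (Nat.cast_nonneg n : (0:ℝ) ≤ n) hε]

lemma aux_pow_inj {x y : ℝ} (hx : 0 ≤ x) (hy : 0 ≤ y) {m : ℕ} (hm : m ≠ 0)
    (h : x ^ m = y ^ m) : x = y := by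
  rcases lt_trichotomy x y with h' | h' | h'
  · exact absurd h (ne_of_lt (pow_lt_pow_left₀ h' hx hm))
  · exact h'
  · exact absurd h (ne_of_gt (pow_lt_pow_left₀ h' hy hm))

lemma aux_prod_nthRoots {m : ℕ} (hm : 0 < m) (w₀ z : ℂ) (hw₀ : w₀ ≠ 0) :
    ∏ ξ ∈ nthRootsFinset m (1 : ℂ), (z - w₀ * ξ) = z ^ m - w₀ ^ m := by
  have hμ := Complex.isPrimitiveRoot_exp m hm.ne'
  have hprod := X_pow_sub_one_eq_prod hm hμ
  have hev := congrArg (Polynomial.eval (z / w₀)) hprod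
  simp only [eval_sub, eval_pow, eval_X, eval_one, eval_prod, eval_C] at hev
  have hcard : (nthRootsFinset m (1 : ℂ)).card = m := hμ.card_nthRootsFinset
  calc ∏ ξ ∈ nthRootsFinset m (1 : ℂ), (z - w₀ * ξ)
      = ∏ ξ ∈ nthRootsFinset m (1 : ℂ), (w₀ * (z / w₀ - ξ)) := by
        refine Finset.prod_congr rfl fun ξ _ => ?_
        field_simp
  _ = w₀ ^ (nthRootsFinset m (1 : ℂ)).card * ∏ ξ ∈ nthRootsFinset m (1 : ℂ), (z / w₀ - ξ) := by
        rw [Finset.prod_mul_distrib, Finset.prod_const]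
  _ = w₀ ^ m * ((z / w₀) ^ m - 1) := by rw [hcard, ← hev]
  _ = z ^ m - w₀ ^ m := by
        rw [div_pow, mul_sub, mul_one, mul_div_assoc', mul_div_cancel_left₀ _ (pow_ne_zero m hw₀)]

end Aux

set_option maxHeartbeats 2000000 in
/-- Lemma 4.7 (counting step): the equation `x(λ) = α(λ)·v(λ)^{-n}` has at least
`m` distinct solutions in a disk of radius `C|u₀|^{-n/m}`, for large `n`. -/
theorem stmt_16 (m : ℕ) (hm : 1 ≤ m) (u₀ : ℂ) (hu₀ : 1 < ‖u₀‖) (R : ℝ) (hR : 0 < R)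
    (x α v : ℂ → ℂ)
    (hx_hol : DifferentiableOn ℂ x (ball (0 : ℂ) R))
    (hα_hol : DifferentiableOn ℂ α (ball (0 : ℂ) R))
    (hv_hol : DifferentiableOn ℂ v (ball (0 : ℂ) R))
    (hx : ∃ B : ℝ, ∀ lam ∈ ball (0 : ℂ) R, ‖x lam - lam ^ m‖ ≤ B * ‖lam‖ ^ (m + 1))
    (hα0 : α 0 ≠ 0) (hα : ∀ lam ∈ ball (0 : ℂ) R, ‖α lam - α 0‖ ≤ ‖α 0‖ / 10)
    (hv0 : ∀ lam ∈ ball (0 : ℂ) R, v lam ≠ 0)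
    (hv : ∃ B' : ℝ, ∀ lam ∈ ball (0 : ℂ) R, ‖v lam - u₀‖ ≤ B' * ‖lam‖) :
    ∀ δ : ℝ, 0 < δ → δ < ‖u₀‖⁻¹ →
      ∃ C : ℝ, 0 < C ∧ ∃ N : ℕ, ∀ n ≥ N,
        ∃ S : Finset ℂ, m ≤ S.card ∧ ∀ lam ∈ S,
          lam ∈ ball (0 : ℂ) (C * ‖u₀‖ ^ (-(n : ℝ) / m)) ∧
          lam ∈ ball (0 : ℂ) R ∧
          x lam = α lam * (v lam)⁻¹ ^ n := by
  classical
  obtain ⟨B, hB⟩ := hx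
  obtain ⟨B', hB'⟩ := hv
  intro δ hδ0 hδu
  have hm0 : m ≠ 0 := by omega
  have hmpos : 0 < m := hm
  have hmR : (0:ℝ) < (m:ℝ) := by exact_mod_cast hmpos
  have hu₀ne : u₀ ≠ 0 := by
    intro h; rw [h, norm_zero] at hu₀; linarith
  set u : ℝ := ‖u₀‖ with hu_def
  have hu1 : 1 < u := hu₀
  have hu0 : (0:ℝ) < u := lt_trans one_pos hu1
  have hA : (0:ℝ) < ‖α 0‖ := norm_pos_iff.2 hα0
  set A : ℝ := ‖α 0‖ with hA_def
  set B₁ : ℝ := max B 1 with hB₁_def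
  set B₂ : ℝ := max B' 1 with hB₂_def
  have hB₁1 : 1 ≤ B₁ := le_max_right _ _
  have hB₂1 : 1 ≤ B₂ := le_max_right _ _
  have hB₁0 : 0 < B₁ := lt_of_lt_of_le one_pos hB₁1
  have hB₂0 : 0 < B₂ := lt_of_lt_of_le one_pos hB₂1
  have hB1' : ∀ lam ∈ ball (0:ℂ) R, ‖x lam - lam ^ m‖ ≤ B₁ * ‖lam‖ ^ (m + 1) := by
    intro lam hlam
    exact (hB lam hlam).trans (mul_le_mul_of_nonneg_right (le_max_left _ _) (by positivity))
  have hB2' : ∀ lam ∈ ball (0:ℂ) R, ‖v lam - u₀‖ ≤ B₂ * ‖lam‖ := by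
    intro lam hlam
    exact (hB' lam hlam).trans (mul_le_mul_of_nonneg_right (le_max_left _ _) (norm_nonneg _))
  -- roots of unity
  have hμ := Complex.isPrimitiveRoot_exp m hm0
  set T : Finset ℂ := nthRootsFinset m (1 : ℂ) with hT_def
  have hTcard : T.card = m := hμ.card_nthRootsFinset
  have hTone : ∀ ξ ∈ T, ξ ^ m = 1 := fun ξ h => (mem_nthRootsFinset hmpos 1).1 h
  have hTnorm : ∀ ξ ∈ T, ‖ξ‖ = 1 := by
    intro ξ hξ
    apply aux_pow_inj (norm_nonneg _) zero_le_one hm0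
    rw [← norm_pow, hTone ξ hξ, norm_one, one_pow]
  -- separation constant
  set sep : ℝ := if hne : (T.offDiag).Nonempty
    then min 1 (T.offDiag.inf' hne fun p => ‖p.1 - p.2‖) else 1 with hsep_def
  have hsep_pos : 0 < sep := by
    rw [hsep_def]
    split
    · rename_i hne
      apply lt_min one_pos
      rw [Finset.lt_inf'_iff]
      intro p hp
      have hpne := (Finset.mem_offDiag.1 hp).2.2
      rw [norm_pos_iff, sub_ne_zero]
      exact hpne
    · exact one_pos
  have hsep_le_one : sep ≤ 1 := by
    rw [hsep_def]; split
    · exact min_le_left _ _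
    · exact le_refl 1
  have hsep_le : ∀ ξ ∈ T, ∀ ξ' ∈ T, ξ ≠ ξ' → sep ≤ ‖ξ - ξ'‖ := by
    intro ξ hξ ξ' hξ' hne'
    have hmem : (ξ, ξ') ∈ T.offDiag := Finset.mem_offDiag.2 ⟨hξ, hξ', hne'⟩
    rw [hsep_def, dif_pos ⟨_, hmem⟩]
    exact le_trans (min_le_right _ _) (Finset.inf'_le _ hmem)
  set c₀ : ℝ := (sep / 3) ^ m with hc₀_def
  have hc₀ : 0 < c₀ := by positivity
  -- continuity of α at 0
  have hα_cont : ContinuousAt α 0 :=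
    hα_hol.continuousOn.continuousAt (ball_mem_nhds 0 hR)
  obtain ⟨η, hη0, hηc⟩ := Metric.continuousAt_iff.1 hα_cont (c₀ * A / 8) (by positivity)
  -- geometric quantities
  set t : ℝ := u ^ (-(1:ℝ) / m) with ht_def
  have ht0 : 0 < t := Real.rpow_pos_of_pos hu0 _
  have ht1 : t < 1 := by
    rw [ht_def]
    exact Real.rpow_lt_one_of_one_lt_of_neg hu1
      (div_neg_of_neg_of_pos (by norm_num) hmR)
  set P : ℝ := A ^ ((1:ℝ) / m) with hP_def
  have hP : 0 < P := Real.rpow_pos_of_pos hA _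
  set r : ℕ → ℝ := fun n => P * t ^ n with hr_def
  have hr_pos : ∀ n, 0 < r n := fun n => by positivity
  have hPm : P ^ m = A := by
    rw [hP_def, ← Real.rpow_natCast (A ^ ((1:ℝ)/m)) m, ← Real.rpow_mul hA.le]
    rw [one_div_mul_cancel hmR.ne', Real.rpow_one]
  have htm : t ^ m = u⁻¹ := by
    rw [ht_def, ← Real.rpow_natCast (u ^ (-(1:ℝ)/m)) m, ← Real.rpow_mul hu0.le]
    rw [show (-(1:ℝ)/m) * m = -1 by field_simp, Real.rpow_neg_one]
  have htn : ∀ n : ℕ, t ^ n = u ^ (-(n:ℝ) / m) := by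
    intro n
    rw [ht_def, ← Real.rpow_natCast (u ^ (-(1:ℝ)/m)) n, ← Real.rpow_mul hu0.le]
    congr 1
    ring
  have hrm : ∀ n : ℕ, (r n) ^ m = A * (u⁻¹) ^ n := by
    intro n
    rw [hr_def]
    simp only
    rw [mul_pow, hPm, ← pow_mul, mul_comm n m, pow_mul, htm]
  -- eventual smallness
  set κ : ℝ := min (min (R / (2*P)) (η / (2*P)))
      (min (1/(16*B₂*P)) (min (c₀/(192*B₂*P)) (c₀/(16*(2:ℝ)^(m+1)*B₁*P)))) with hκ_def
  have hκ0 : 0 < κ := by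
    apply lt_min (lt_min (by positivity) (by positivity))
    exact lt_min (by positivity) (lt_min (by positivity) (by positivity))
  have hq_tendsto : Filter.Tendsto (fun n : ℕ => ((n:ℝ) + 1) * t ^ n)
      Filter.atTop (nhds 0) := by
    have h1 := tendsto_pow_const_mul_const_pow_of_lt_one 1 ht0.le ht1
    have h2 := tendsto_pow_atTop_nhds_zero_of_lt_one ht0.le ht1
    have h3 := h1.add h2
    simp only [pow_one, add_zero] at h3
    convert h3 using 2 with n
    ring
  have hev : ∀ᶠ n : ℕ in Filter.atTop, ((n:ℝ) + 1) * t ^ n < κ :=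
    hq_tendsto.eventually_lt_const hκ0
  obtain ⟨N, hN⟩ := Filter.eventually_atTop.1 hev
  refine ⟨3 * P, by positivity, N, ?_⟩
  intro n hn
  have hqn : ((n:ℝ) + 1) * t ^ n < κ := hN n hn
  have htnpos : 0 < t ^ n := by positivity
  have hncast : (0:ℝ) ≤ (n:ℝ) := Nat.cast_nonneg n
  have hq1 : t ^ n ≤ ((n:ℝ) + 1) * t ^ n := by
    have := mul_nonneg hncast htnpos.le
    linarith
  have hq2 : (n:ℝ) * t ^ n ≤ ((n:ℝ) + 1) * t ^ n := by linarith
  -- the five smallness conditions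
  have hC1 : 2 * r n < R := by
    have h := lt_of_le_of_lt hq1 (lt_of_lt_of_le hqn
      (le_trans (min_le_left _ _) (min_le_left _ _)))
    calc 2 * r n = 2 * P * t ^ n := by simp only [hr_def]; ring
    _ < 2 * P * (R / (2*P)) := by
        exact mul_lt_mul_of_pos_left h (by positivity)
    _ = R := by field_simp
  have hC2 : 2 * r n < η := by
    have h := lt_of_le_of_lt hq1 (lt_of_lt_of_le hqn
      (le_trans (min_le_left _ _) (min_le_right _ _)))
    calc 2 * r n = 2 * P * t ^ n := by simp only [hr_def]; ring
    _ < 2 * P * (η / (2*P)) := mul_lt_mul_of_pos_left h (by positivity)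
    _ = η := by field_simp
  have hC3 : (n:ℝ) * (B₂ * (2 * r n)) ≤ 1/8 := by
    have h := lt_of_le_of_lt hq2 (lt_of_lt_of_le hqn
      (le_trans (min_le_right _ _) (min_le_left _ _)))
    calc (n:ℝ) * (B₂ * (2 * r n)) = 2 * B₂ * P * ((n:ℝ) * t ^ n) := by
          simp only [hr_def]; ring
    _ ≤ 2 * B₂ * P * (1/(16*B₂*P)) := by
        apply mul_le_mul_of_nonneg_left h.le (by positivity)
    _ = 1/8 := by field_simp; ring
  have hC4 : 12 * (n:ℝ) * B₂ * r n ≤ c₀/16 := by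
    have h := lt_of_le_of_lt hq2 (lt_of_lt_of_le hqn
      (le_trans (min_le_right _ _) (le_trans (min_le_right _ _) (min_le_left _ _))))
    calc 12 * (n:ℝ) * B₂ * r n = 12 * B₂ * P * ((n:ℝ) * t ^ n) := by
          simp only [hr_def]; ring
    _ ≤ 12 * B₂ * P * (c₀/(192*B₂*P)) := by
        apply mul_le_mul_of_nonneg_left h.le (by positivity)
    _ = c₀/16 := by field_simp; ring
  have hC5 : (2:ℝ)^(m+1) * B₁ * r n ≤ c₀/16 := by
    have h := lt_of_le_of_lt hq1 (lt_of_lt_of_le hqn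
      (le_trans (min_le_right _ _) (le_trans (min_le_right _ _) (min_le_right _ _))))
    calc (2:ℝ)^(m+1) * B₁ * r n = (2:ℝ)^(m+1) * B₁ * P * t ^ n := by
          simp only [hr_def]; ring
    _ ≤ (2:ℝ)^(m+1) * B₁ * P * (c₀/(16*(2:ℝ)^(m+1)*B₁*P)) := by
        apply mul_le_mul_of_nonneg_left h.le (by positivity)
    _ = c₀/16 := by field_simp
  -- fixed n setup
  set un : ℝ := (u⁻¹) ^ n with hun_def
  have hun : 0 < un := by positivity
  set w : ℂ := α 0 * (u₀⁻¹) ^ n with hw_def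
  have hw_ne : w ≠ 0 := mul_ne_zero hα0 (pow_ne_zero _ (inv_ne_zero hu₀ne))
  have hwnorm : ‖w‖ = A * un := by
    rw [hw_def, norm_mul, norm_pow, norm_inv]
  obtain ⟨w₀, hw₀⟩ := IsAlgClosed.exists_pow_nat_eq w hmpos
  have hw₀ne : w₀ ≠ 0 := by
    intro h; apply hw_ne; rw [← hw₀, h, zero_pow hm0]
  have hw₀norm : ‖w₀‖ = r n := by
    apply aux_pow_inj (norm_nonneg _) (hr_pos n).le hm0
    rw [← norm_pow, hw₀, hwnorm, hrm n]
  set s : ℝ := (sep / 3) * r n with hs_def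
  have hs0 : 0 < s := by positivity
  have hs_le : s ≤ r n := by
    rw [hs_def]
    have h1 : sep / 3 ≤ 1 := by linarith
    have h2 := mul_le_mul_of_nonneg_right h1 (hr_pos n).le
    linarith
  have hsm : s ^ m = c₀ * (A * un) := by
    rw [hs_def, mul_pow, hrm n, hc₀_def, hun_def]
  set F : ℂ → ℂ := fun lam => x lam - α lam * (v lam)⁻¹ ^ n with hF_def
  -- main estimate
  have hFG : ∀ lam : ℂ, ‖lam‖ ≤ 2 * r n →
      ‖F lam - (lam ^ m - w)‖ ≤ (c₀/4) * (A * un) := by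
    intro lam hlam
    have hlamR : lam ∈ ball (0:ℂ) R := by
      rw [mem_ball, dist_zero_right]; exact lt_of_le_of_lt hlam hC1
    have h1 : ‖x lam - lam ^ m‖ ≤ (c₀/16) * (A * un) := by
      calc ‖x lam - lam ^ m‖ ≤ B₁ * ‖lam‖ ^ (m+1) := hB1' lam hlamR
      _ ≤ B₁ * (2 * r n) ^ (m+1) := by
          apply mul_le_mul_of_nonneg_left
            (pow_le_pow_left₀ (norm_nonneg _) hlam (m+1)) hB₁0.le
      _ = ((2:ℝ)^(m+1) * B₁ * r n) * (r n) ^ m := by rw [mul_pow]; ring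
      _ ≤ (c₀/16) * (r n) ^ m := by
          apply mul_le_mul_of_nonneg_right hC5 (by positivity)
      _ = (c₀/16) * (A * un) := by rw [hrm n]
    have h2 : ‖α 0 - α lam‖ ≤ c₀ * A / 8 := by
      have hd : dist lam 0 < η := by
        rw [dist_zero_right]; exact lt_of_le_of_lt hlam hC2
      have := hηc hd
      rw [dist_eq_norm] at this
      rw [norm_sub_rev]
      exact this.le
    have h3 : ‖α lam‖ ≤ 2 * A := by
      have := hα lam hlamR
      have h4 := norm_add_le (α lam - α 0) (α 0)
      simp only [sub_add_cancel] at h4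
      have hA' : (A:ℝ)/10 ≤ A := by linarith
      calc ‖α lam‖ ≤ ‖α lam - α 0‖ + ‖α 0‖ := h4
      _ ≤ A/10 + A := by exact add_le_add this (le_refl _)
      _ ≤ 2*A := by linarith
    have h4 : ‖(u₀⁻¹) ^ n - (v lam)⁻¹ ^ n‖ ≤ un * (6 * n * B₂ * r n) := by
      set wq : ℂ := v lam / u₀ with hwq_def
      have hvne : v lam ≠ 0 := hv0 lam hlamR
      have hwq0 : wq ≠ 0 := div_ne_zero hvne hu₀ne
      have hwq : ‖wq - 1‖ ≤ B₂ * (2 * r n) := by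
        have heq : wq - 1 = (v lam - u₀) / u₀ := by
          rw [hwq_def]; field_simp
        rw [heq, norm_div]
        calc ‖v lam - u₀‖ / u ≤ ‖v lam - u₀‖ :=
              div_le_self (norm_nonneg _) hu1.le
        _ ≤ B₂ * ‖lam‖ := hB2' lam hlamR
        _ ≤ B₂ * (2 * r n) := mul_le_mul_of_nonneg_left hlam hB₂0.le
      have hiq := aux_inv_pow_sub_one hwq hC3 hwq0
      have hsplit : (v lam)⁻¹ ^ n = (u₀⁻¹) ^ n * (wq⁻¹) ^ n := by
        rw [← mul_pow]
        congr 1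
        rw [hwq_def]
        field_simp
      rw [hsplit, show (u₀⁻¹) ^ n - (u₀⁻¹) ^ n * (wq⁻¹) ^ n
            = (u₀⁻¹) ^ n * (1 - (wq⁻¹) ^ n) by ring,
        norm_mul, norm_pow, norm_inv, norm_sub_rev]
      calc u⁻¹ ^ n * ‖(wq⁻¹) ^ n - 1‖ ≤ u⁻¹ ^ n * (3 * n * (B₂ * (2 * r n))) := by
            apply mul_le_mul_of_nonneg_left hiq (by positivity)
      _ = un * (6 * n * B₂ * r n) := by rw [hun_def]; ring
    have hdecomp : F lam - (lam ^ m - w)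
        = (x lam - lam ^ m) + ((α 0 - α lam) * (u₀⁻¹) ^ n
          + α lam * ((u₀⁻¹) ^ n - (v lam)⁻¹ ^ n)) := by
      rw [hF_def, hw_def]; ring
    have hnun : ‖(u₀⁻¹ : ℂ) ^ n‖ = un := by
      rw [norm_pow, norm_inv]
    calc ‖F lam - (lam ^ m - w)‖
        ≤ ‖x lam - lam ^ m‖ + ‖(α 0 - α lam) * (u₀⁻¹) ^ n
            + α lam * ((u₀⁻¹) ^ n - (v lam)⁻¹ ^ n)‖ := by
          rw [hdecomp]; exact norm_add_le _ _
    _ ≤ ‖x lam - lam ^ m‖ + (‖(α 0 - α lam) * (u₀⁻¹) ^ n‖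
            + ‖α lam * ((u₀⁻¹) ^ n - (v lam)⁻¹ ^ n)‖) := by
          have := norm_add_le ((α 0 - α lam) * (u₀⁻¹) ^ n)
            (α lam * ((u₀⁻¹) ^ n - (v lam)⁻¹ ^ n))
          linarith
    _ ≤ (c₀/16) * (A * un) + ((c₀ * A / 8) * un + (2*A) * (un * (6 * n * B₂ * r n))) := by
          have hb1 : ‖(α 0 - α lam) * (u₀⁻¹) ^ n‖ ≤ (c₀ * A / 8) * un := by
            rw [norm_mul, hnun]
            exact mul_le_mul_of_nonneg_right h2 hun.le
          have hb2 : ‖α lam * ((u₀⁻¹) ^ n - (v lam)⁻¹ ^ n)‖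
              ≤ (2*A) * (un * (6 * n * B₂ * r n)) := by
            rw [norm_mul]
            exact mul_le_mul h3 h4 (norm_nonneg _) (by positivity)
          linarith [h1, hb1, hb2]
    _ ≤ (c₀/16) * (A * un) + ((c₀/8) * (A * un) + (c₀/16) * (A * un)) := by
          have hb3 : (2*A) * (un * (6 * n * B₂ * r n)) ≤ (c₀/16) * (A * un) := by
            have h := mul_le_mul_of_nonneg_right hC4 (by positivity : (0:ℝ) ≤ A * un)
            calc (2*A) * (un * (6 * n * B₂ * r n))
                = (12 * (n:ℝ) * B₂ * r n) * (A * un) := by ring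
            _ ≤ (c₀/16) * (A * un) := h
          have hb4 : (c₀ * A / 8) * un = (c₀/8) * (A * un) := by ring
          linarith [hb3, hb4.le]
    _ = (c₀/4) * (A * un) := by ring
  -- find a root near each scaled root of unity
  have hcenter : ∀ ξ ∈ T, ∃ z ∈ closedBall (w₀ * ξ) s, F z = 0 := by
    intro ξ hξ
    have hξnorm : ‖ξ‖ = 1 := hTnorm ξ hξ
    have hζnorm : ‖w₀ * ξ‖ = r n := by rw [norm_mul, hw₀norm, hξnorm, mul_one]
    have hball_norm : ∀ z ∈ closedBall (w₀ * ξ) s, ‖z‖ ≤ 2 * r n := by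
      intro z hz
      rw [mem_closedBall, dist_eq_norm] at hz
      calc ‖z‖ = ‖(z - w₀ * ξ) + w₀ * ξ‖ := by ring_nf
      _ ≤ ‖z - w₀ * ξ‖ + ‖w₀ * ξ‖ := norm_add_le _ _
      _ ≤ s + r n := add_le_add hz (le_of_eq hζnorm)
      _ ≤ 2 * r n := by linarith [hs_le]
    have hball_sub : closedBall (w₀ * ξ) s ⊆ ball (0:ℂ) R := by
      intro z hz
      rw [mem_ball, dist_zero_right]
      exact lt_of_le_of_lt (hball_norm z hz) hC1
    have hFdiff : DifferentiableOn ℂ F (closedBall (w₀ * ξ) s) := by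
      apply DifferentiableOn.mono _ hball_sub
      exact hx_hol.sub (hα_hol.mul ((hv_hol.inv hv0).pow n))
    apply aux_exists_zero F (w₀ * ξ) s hs0 hFdiff
    intro z hzsph
    have hzd : ‖z - w₀ * ξ‖ = s := by
      rw [mem_sphere, dist_eq_norm] at hzsph
      exact hzsph
    have hznorm : ‖z‖ ≤ 2 * r n :=
      hball_norm z (sphere_subset_closedBall hzsph)
    -- center bound
    have hGζ : (w₀ * ξ) ^ m - w = 0 := by
      rw [mul_pow, hTone ξ hξ, mul_one, hw₀, sub_self]
    have hFζ : ‖F (w₀ * ξ)‖ ≤ (c₀/4) * (A * un) := by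
      have := hFG (w₀ * ξ) (by rw [hζnorm]; linarith [hr_pos n])
      rwa [hGζ, sub_zero] at this
    -- sphere lower bound
    have hprodz : z ^ m - w = ∏ ξ' ∈ T, (z - w₀ * ξ') := by
      rw [hT_def, aux_prod_nthRoots hmpos w₀ z hw₀ne, hw₀]
    have hlow : s ^ m ≤ ‖z ^ m - w‖ := by
      rw [hprodz, norm_prod, ← Finset.mul_prod_erase T _ hξ]
      have hother : ∀ ξ' ∈ T.erase ξ, s ≤ ‖z - w₀ * ξ'‖ := by
        intro ξ' hξ'
        have hξ'T := Finset.mem_of_mem_erase hξ'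
        have hne' : ξ' ≠ ξ := Finset.ne_of_mem_erase hξ'
        have hsep' : sep ≤ ‖ξ - ξ'‖ := hsep_le ξ hξ ξ' hξ'T (Ne.symm hne')
        have htri : ‖w₀ * ξ - w₀ * ξ'‖ ≤ ‖w₀ * ξ - z‖ + ‖z - w₀ * ξ'‖ := by
          have := norm_add_le (w₀ * ξ - z) (z - w₀ * ξ')
          simpa using this
        have hdist : ‖w₀ * ξ - w₀ * ξ'‖ = r n * ‖ξ - ξ'‖ := by
          rw [← mul_sub, norm_mul, hw₀norm]
        have hz' : ‖w₀ * ξ - z‖ = s := by rw [norm_sub_rev]; exact hzd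
        have hrs : r n * sep ≤ r n * ‖ξ - ξ'‖ :=
          mul_le_mul_of_nonneg_left hsep' (hr_pos n).le
        have h3s : r n * sep = 3 * s := by rw [hs_def]; ring
        rw [hdist] at htri
        rw [hz'] at htri
        linarith
      have hcarde : (T.erase ξ).card = m - 1 := by
        rw [Finset.card_erase_of_mem hξ, hTcard]
      have hprodlow : s ^ (m-1) ≤ ∏ ξ' ∈ T.erase ξ, ‖z - w₀ * ξ'‖ := by
        calc s ^ (m-1) = ∏ _ξ' ∈ T.erase ξ, s := by rw [Finset.prod_const, hcarde]
        _ ≤ ∏ ξ' ∈ T.erase ξ, ‖z - w₀ * ξ'‖ :=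
            Finset.prod_le_prod (fun _ _ => hs0.le) hother
      calc s ^ m = s * s ^ (m-1) := by
            conv_lhs => rw [show m = 1 + (m-1) by omega]
            rw [pow_add, pow_one]
      _ ≤ ‖z - w₀ * ξ‖ * ∏ ξ' ∈ T.erase ξ, ‖z - w₀ * ξ'‖ := by
            apply mul_le_mul (le_of_eq hzd.symm) hprodlow (by positivity) (norm_nonneg _)
    -- conclude strict inequality
    have hlow' : c₀ * (A * un) ≤ ‖z ^ m - w‖ := by rw [← hsm]; exact hlow
    have hFz := hFG z hznorm
    have htr : ‖z ^ m - w‖ ≤ ‖F z‖ + ‖F z - (z ^ m - w)‖ := by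
      have h := norm_sub_le (F z) (F z - (z ^ m - w))
      rwa [sub_sub_cancel] at h
    have hpos : 0 < c₀ * (A * un) := by positivity
    have hFzlow : (3*c₀/4) * (A * un) ≤ ‖F z‖ := by linarith
    have : (c₀/4) * (A * un) < (3*c₀/4) * (A * un) := by linarith
    linarith
  -- choose the roots
  choose! g hg1 hg2 using hcenter
  refine ⟨T.image g, ?_, ?_⟩
  · have hinj : Set.InjOn g ↑T := by
      intro ξ hξ ξ' hξ' hgg
      by_contra hne'
      have hd1 : dist (g ξ) (w₀ * ξ) ≤ s := mem_closedBall.1 (hg1 ξ hξ)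
      have hd2 : dist (g ξ') (w₀ * ξ') ≤ s := mem_closedBall.1 (hg1 ξ' hξ')
      have htri : dist (w₀ * ξ) (w₀ * ξ') ≤ dist (w₀ * ξ) (g ξ) + dist (g ξ) (w₀ * ξ') := dist_triangle _ _ _
      have hdist : dist (w₀ * ξ) (w₀ * ξ') = r n * ‖ξ - ξ'‖ := by
        rw [dist_eq_norm, ← mul_sub, norm_mul, hw₀norm]
      have hsep' : sep ≤ ‖ξ - ξ'‖ := hsep_le ξ hξ ξ' hξ' hne'
      have hrs : r n * sep ≤ r n * ‖ξ - ξ'‖ :=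
        mul_le_mul_of_nonneg_left hsep' (hr_pos n).le
      have h3s : r n * sep = 3 * s := by rw [hs_def]; ring
      have e1 : dist (w₀ * ξ) (g ξ) ≤ s := by rw [dist_comm]; exact hd1
      have e2 : dist (g ξ) (w₀ * ξ') ≤ s := by rw [hgg]; exact hd2
      rw [hdist] at htri
      linarith
    rw [Finset.card_image_of_injOn hinj, hTcard]
  · intro lam hlam
    obtain ⟨ξ, hξ, rfl⟩ := Finset.mem_image.1 hlam
    have hξnorm : ‖ξ‖ = 1 := hTnorm ξ hξ
    have hζnorm : ‖w₀ * ξ‖ = r n := by rw [norm_mul, hw₀norm, hξnorm, mul_one]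
    have hnorm_le : ‖g ξ‖ ≤ 2 * r n := by
      have hd1 : ‖g ξ - w₀ * ξ‖ ≤ s := by
        have := mem_closedBall.1 (hg1 ξ hξ)
        rwa [dist_eq_norm] at this
      calc ‖g ξ‖ = ‖(g ξ - w₀ * ξ) + w₀ * ξ‖ := by ring_nf
      _ ≤ ‖g ξ - w₀ * ξ‖ + ‖w₀ * ξ‖ := norm_add_le _ _
      _ ≤ s + r n := add_le_add hd1 (le_of_eq hζnorm)
      _ ≤ 2 * r n := by linarith [hs_le]
    refine ⟨?_, ?_, ?_⟩
    · rw [mem_ball, dist_zero_right]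
      have hlt : 2 * r n < 3 * P * (u ^ (-(n:ℝ) / m)) := by
        rw [← htn n, hr_def]
        simp only
        have := mul_pos hP htnpos
        linarith
      exact lt_of_le_of_lt hnorm_le hlt
    · rw [mem_ball, dist_zero_right]
      exact lt_of_le_of_lt hnorm_le hC1
    · have hz := hg2 ξ hξ
      rw [hF_def] at hz
      simp only at hz
      linear_combination hz
end

section
/- Let u ∈ ℂ with |u| > 1 and s ∈ ℂ with 0 < |s| < 1, and let h ≥ 2 be an integer. Suppose (λ_n) is a sequence of complex numbers and m, q are positive integers such that λ_n^m ≅ u^{-nh} (i.e. λ_n^m · u^{nh} converges to a nonzero constant) and λ_n^q ≅ (u^{-1}s)^n. Then u^{m - hq} = s^m. -/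
open Filter Topology

theorem stmt_17 (u s : ℂ) (hu : 1 < ‖u‖) (hs0 : 0 < ‖s‖) (hs1 : ‖s‖ < 1)
    (h m q : ℕ) (hh : 2 ≤ h) (hm : 1 ≤ m) (hq : 1 ≤ q)
    (lam : ℕ → ℂ) (K K' : ℂ) (hK : K ≠ 0) (hK' : K' ≠ 0)
    (h1 : Tendsto (fun n : ℕ => lam n ^ m * u ^ (n * h)) atTop (𝓝 K))
    (h2 : Tendsto (fun n : ℕ => lam n ^ q * (u * s⁻¹) ^ n) atTop (𝓝 K')) :
    u ^ ((m : ℤ) - (h : ℤ) * (q : ℤ)) = s ^ (m : ℤ) := by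
  have hu0 : u ≠ 0 := by
    intro hz; rw [hz] at hu; simp at hu; linarith
  have hs : s ≠ 0 := norm_pos_iff.mp hs0
  set c : ℂ := u ^ (h * q) * s ^ m / u ^ m with hc
  set L : ℂ := K ^ q / K' ^ m with hL
  have hLne : L ≠ 0 := div_ne_zero (pow_ne_zero _ hK) (pow_ne_zero _ hK')
  have hA : Tendsto (fun n : ℕ => (lam n ^ m * u ^ (n * h)) ^ q) atTop (𝓝 (K ^ q)) :=
    h1.pow q
  have hB : Tendsto (fun n : ℕ => (lam n ^ q * (u * s⁻¹) ^ n) ^ m) atTop (𝓝 (K' ^ m)) :=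
    h2.pow m
  have hAB := hA.div hB (pow_ne_zero _ hK')
  have hne : ∀ᶠ n in atTop, lam n ≠ 0 := by
    filter_upwards [h1.eventually_ne hK] with n hn
    intro hz
    exact hn (by simp [hz, zero_pow (by omega : m ≠ 0)])
  have hT : Tendsto (fun n : ℕ => c ^ n) atTop (𝓝 L) := by
    refine hAB.congr' ?_
    filter_upwards [hne] with n hn
    have hun : u ^ (n * h) ≠ 0 := pow_ne_zero _ hu0
    rw [Pi.div_apply, hc]
    field_simp [hc]
    simp only [mul_pow, div_pow, ← pow_mul]
    field_simp
    ring
  have h3 : Tendsto (fun n : ℕ => c ^ (n + 1)) atTop (𝓝 L) :=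
    hT.comp (tendsto_add_atTop_nat 1)
  have h4 : Tendsto (fun n : ℕ => c * c ^ n) atTop (𝓝 (c * L)) := hT.const_mul c
  have h3' : Tendsto (fun n : ℕ => c * c ^ n) atTop (𝓝 L) := by
    simpa [pow_succ, mul_comm] using h3
  have hcL : c * L = L := tendsto_nhds_unique h4 h3'
  have hc1 : c = 1 := by
    have := mul_right_cancel₀ hLne (by rw [hcL, one_mul] : c * L = 1 * L)
    exact this
  have key : u ^ (h * q) * s ^ m = u ^ m := by
    rw [hc, div_eq_one_iff_eq (pow_ne_zero _ hu0)] at hc1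
    linear_combination hc1
  rw [show ((m : ℤ) - (h : ℤ) * (q : ℤ)) = (m : ℤ) - ((h * q : ℕ) : ℤ) by push_cast; ring,
    zpow_sub₀ hu0, zpow_natCast, zpow_natCast, zpow_natCast,
    div_eq_iff (pow_ne_zero _ hu0)]
  linear_combination -key
end
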